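/- arXiv:1604.01106 — 3 statements merged into one kernel-verified Lean document; each statement's English description precedes it below -/
import Mathlib

section
/- The formal power series g_b(x) = ∑_{n≥0} (∑_{k=0}^{n} C(n,k)^2 · C(2k,k)) x^n satisfies, as an identity of formal power series in z, g_b(z^2) = (1 + 3z)^{-1} · g_b(z·(1 − z)/(1 + 3z)). -/
open PowerSeries

/-- Formal composition `f ∘ g` of power series, valid when `g` has zero constant term:
the `n`-th coefficient is `∑_{k=0}^{n} f_k · [z^n] g^k`. -/
noncomputable def psComp (f g : PowerSeries ℚ) : PowerSeries ℚ :=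
  PowerSeries.mk fun n =>
    ∑ k ∈ Finset.range (n + 1), (PowerSeries.coeff (R := ℚ) k f) * PowerSeries.coeff (R := ℚ) n (g ^ k)

noncomputable def gb : PowerSeries ℚ :=
  PowerSeries.mk fun n =>
    ∑ k ∈ Finset.range (n + 1), (n.choose k : ℚ) ^ 2 * ((2 * k).choose k : ℚ)

namespace PsAux

abbrev R := PowerSeries ℚ

noncomputable def pc (f g : PowerSeries ℚ) (N : ℕ) : PowerSeries ℚ :=
  ∑ k ∈ Finset.range N, PowerSeries.C (R := ℚ) (PowerSeries.coeff (R := ℚ) k f) * g ^ k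

lemma coeff_pow_eq_zero {g : R} (hg : constantCoeff (R := ℚ) g = 0) {n k : ℕ} (h : n < k) :
    coeff (R := ℚ) n (g ^ k) = 0 := by
  have hdvd : (X : R) ^ k ∣ g ^ k := pow_dvd_pow_of_dvd (X_dvd_iff.mpr hg) k
  exact (X_pow_dvd_iff.mp hdvd) n h

lemma coeff_pc (f g : R) (N n : ℕ) :
    coeff (R := ℚ) n (pc f g N) = ∑ k ∈ Finset.range N, (coeff (R := ℚ) k f) * coeff (R := ℚ) n (g ^ k) := by
  simp [pc, coeff_C_mul]

lemma coeff_psComp_pc {g : R} (hg : constantCoeff (R := ℚ) g = 0) (f : R) {n N : ℕ} (h : n < N) :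
    coeff (R := ℚ) n (psComp f g) = coeff (R := ℚ) n (pc f g N) := by
  rw [coeff_pc, psComp, coeff_mk]
  apply Finset.sum_subset
  · intro k hk
    simp only [Finset.mem_range] at *
    omega
  · intro k hk hk'
    simp only [Finset.mem_range, not_lt] at *
    rw [coeff_pow_eq_zero hg (by omega), mul_zero]

lemma coeff_mul_congr_right {F F' E : R} {n : ℕ}
    (h : ∀ i ≤ n, coeff (R := ℚ) i F = coeff (R := ℚ) i F') :
    coeff (R := ℚ) n (E * F) = coeff (R := ℚ) n (E * F') := by
  rw [coeff_mul, coeff_mul]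
  apply Finset.sum_congr rfl
  intro p hp
  rw [Finset.HasAntidiagonal.mem_antidiagonal] at hp
  rw [h p.2 (by omega)]

lemma coeff_mul_congr_left {F F' E : R} {n : ℕ}
    (h : ∀ i ≤ n, coeff (R := ℚ) i F = coeff (R := ℚ) i F') :
    coeff (R := ℚ) n (F * E) = coeff (R := ℚ) n (F' * E) := by
  rw [mul_comm F E, mul_comm F' E]; exact coeff_mul_congr_right h

lemma psComp_add (f₁ f₂ g : R) : psComp (f₁ + f₂) g = psComp f₁ g + psComp f₂ g := by
  ext n
  simp [psComp, add_mul, Finset.sum_add_distrib]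

lemma psComp_C_mul (c : ℚ) (f g : R) : psComp (C (R := ℚ) c * f) g = C (R := ℚ) c * psComp f g := by
  ext n
  simp [psComp, coeff_C_mul, Finset.mul_sum, mul_assoc]

lemma psComp_zero (g : R) : psComp 0 g = 0 := by
  ext n; simp [psComp]

lemma pc_X_mul (f g : R) (N : ℕ) : pc (X * f) g (N + 1) = g * pc f g N := by
  rw [pc, Finset.sum_range_succ']
  have h0 : coeff (R := ℚ) 0 (X * f) = 0 := by simp
  rw [h0]
  simp only [coeff_succ_X_mul, map_zero, zero_mul, add_zero, pow_zero]
  rw [pc, Finset.mul_sum]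
  apply Finset.sum_congr rfl
  intro k _
  ring

lemma psComp_X_mul {g : R} (hg : constantCoeff (R := ℚ) g = 0) (f : R) :
    psComp (X * f) g = g * psComp f g := by
  ext n
  rw [coeff_psComp_pc hg _ (Nat.lt_succ_of_lt (Nat.lt_succ_self n)), pc_X_mul,
    coeff_mul_congr_right (fun i hi => (coeff_psComp_pc hg f (Nat.lt_succ_of_le hi)).symm)]

lemma pc_deriv (f g : R) (N : ℕ) :
    d⁄dX ℚ (pc f g (N + 1)) = pc (d⁄dX ℚ f) g N * d⁄dX ℚ g := by
  rw [pc, map_sum, Finset.sum_range_succ']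
  have h0 : d⁄dX ℚ (C (R := ℚ) (coeff (R := ℚ) 0 f) * g ^ 0) = 0 := by
    simp
  rw [h0, add_zero, pc, Finset.sum_mul]
  apply Finset.sum_congr rfl
  intro k _
  rw [Derivation.leibniz, Derivation.leibniz_pow]
  simp only [derivative_C, coeff_derivative, map_mul, smul_eq_mul, map_add, map_one,
    map_natCast, Nat.add_sub_cancel, nsmul_eq_mul, Nat.cast_add, Nat.cast_one, mul_zero, add_zero]
  ring

lemma psComp_deriv {g : R} (hg : constantCoeff (R := ℚ) g = 0) (f : R) :
    d⁄dX ℚ (psComp f g) = psComp (d⁄dX ℚ f) g * d⁄dX ℚ g := by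
  ext n
  rw [coeff_derivative, coeff_psComp_pc hg f (Nat.lt_succ_self (n+1)), ← coeff_derivative,
    pc_deriv, coeff_mul_congr_left
      (fun i hi => (coeff_psComp_pc hg (d⁄dX ℚ f) (Nat.lt_succ_of_le hi)).symm)]

lemma coeff_zero_psComp (f g : R) : coeff (R := ℚ) 0 (psComp f g) = coeff (R := ℚ) 0 f := by
  simp [psComp]

/-! ### The sequence and its recurrence -/

def tQ (n k : ℕ) : ℚ := (n.choose k : ℚ)^2 * ((2*k).choose k : ℚ)
def HQ (n k : ℕ) : ℚ := (k:ℚ)^3*(3*k-4*n-4) * (((n+1).choose k : ℚ))^2 * ((2*k).choose k : ℚ)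
def aseq (n : ℕ) : ℚ := ∑ k ∈ Finset.range (n+1), (n.choose k : ℚ)^2 * ((2*k).choose k : ℚ)

lemma R1 (n k : ℕ) (h : k ≤ n + 1) :
    (n + 1 - k) * (n+1).choose k = (n+1) * n.choose k := by
  rcases Nat.lt_or_ge k (n+1) with h' | h'
  · have hk : k ≤ n := by omega
    have h1 := Nat.choose_mul_factorial_mul_factorial h
    have h2 := Nat.choose_mul_factorial_mul_factorial hk
    apply Nat.eq_of_mul_eq_mul_right
      (show 0 < k.factorial * (n-k).factorial from
        Nat.mul_pos (Nat.factorial_pos _) (Nat.factorial_pos _))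
    have e1 : n + 1 - k = (n - k) + 1 := by omega
    calc (n+1-k) * (n+1).choose k * (k.factorial * (n-k).factorial)
        = (n+1).choose k * k.factorial * ((n+1-k) * (n-k).factorial) := by ring
      _ = (n+1).choose k * k.factorial * (n+1-k).factorial := by
            rw [e1, Nat.factorial_succ]
      _ = (n+1).factorial := h1
      _ = (n+1) * n.factorial := Nat.factorial_succ n
      _ = (n+1) * (n.choose k * k.factorial * (n-k).factorial) := by rw [h2]
      _ = (n+1) * n.choose k * (k.factorial * (n-k).factorial) := by ring
  · have hk : k = n+1 := by omega
    subst hk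
    simp [Nat.choose_succ_self]

lemma R3 (k : ℕ) :
    ((k+1) * ((k+1) * (2*k+2).choose (k+1))) = (2*k+2) * ((2*k+1) * ((2*k).choose k)) := by
  have h1 := Nat.add_one_mul_choose_eq (2*k+1) k
  have h2 := Nat.add_one_mul_choose_eq (2*k) k
  have h3 : (2*k+1).choose (k+1) = (2*k+1).choose k := by
    have := Nat.choose_symm (show k+1 ≤ 2*k+1 by omega)
    rw [show 2*k+1-(k+1) = k from by omega] at this
    exact this.symm
  calc (k+1) * ((k+1) * (2*k+2).choose (k+1))
      = (k+1) * ((2*k+1+1).choose (k+1) * (k+1)) := by ring_nf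
    _ = (k+1) * ((2*k+1+1) * (2*k+1).choose k) := by rw [← h1]
    _ = (2*k+2) * ((2*k+1).choose (k+1) * (k+1)) := by rw [h3]; ring
    _ = (2*k+2) * ((2*k+1) * (2*k).choose k) := by
          rw [show (2*k+1).choose (k+1) * (k+1) = (2*k+1) * (2*k).choose k from by
            rw [← h2]]

lemma R1Q (n k : ℕ) (h : k ≤ n + 1) :
    ((n:ℚ) + 1 - k) * ((n+1).choose k : ℚ) = ((n:ℚ)+1) * (n.choose k : ℚ) := by
  have := R1 n k h
  have hc : ((n + 1 - k : ℕ) : ℚ) = (n:ℚ) + 1 - k := by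
    push_cast [Nat.cast_sub (show k ≤ n+1 from h)]; ring
  calc ((n:ℚ) + 1 - k) * ((n+1).choose k : ℚ)
      = (((n + 1 - k) * (n+1).choose k : ℕ) : ℚ) := by push_cast [← hc]; ring
    _ = (((n+1) * n.choose k : ℕ) : ℚ) := by rw [this]
    _ = ((n:ℚ)+1) * (n.choose k : ℚ) := by push_cast; ring

lemma R3Q (k : ℕ) :
    ((k:ℚ)+1)^2 * ((2*k+2).choose (k+1) : ℚ)
      = (2*(k:ℚ)+2) * (2*(k:ℚ)+1) * ((2*k).choose k : ℚ) := by
  have := R3 k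
  have : (((k+1) * ((k+1) * (2*k+2).choose (k+1)) : ℕ) : ℚ)
      = (((2*k+2) * ((2*k+1) * ((2*k).choose k)) : ℕ) : ℚ) := by rw [this]
  push_cast at this
  nlinarith [this]

lemma R2Q (n k : ℕ) :
    ((n:ℚ)+1) * (n.choose k : ℚ) = ((n+1).choose (k+1) : ℚ) * ((k:ℚ)+1) := by
  have := Nat.add_one_mul_choose_eq n k
  have : (((n+1) * n.choose k : ℕ) : ℚ) = (((n+1).choose (k+1) * (k+1) : ℕ) : ℚ) := by rw [this]
  push_cast at this
  linarith [this]

lemma cert (m k : ℕ) :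
    ((m:ℚ)+2)^2 * ( ((m:ℚ)+2)^2 * tQ (m+2) k
      - (10*((m:ℚ)+1)^2+10*((m:ℚ)+1)+3) * tQ (m+1) k
      + 9*((m:ℚ)+1)^2 * tQ m k )
    = HQ (m+1) (k+1) - HQ (m+1) k := by
  rcases Nat.lt_or_ge (m+1) k with hk | hk
  · rcases Nat.lt_or_ge (m+2) k with hk2 | hk2
    · simp [tQ, HQ, Nat.choose_eq_zero_of_lt, hk, hk2, Nat.choose_eq_zero_of_lt (show m < k by omega),
        Nat.choose_eq_zero_of_lt (show m+1+1 < k+1 by omega)]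
    · have hk3 : k = m+2 := by omega
      subst hk3
      simp only [tQ, HQ]
      rw [Nat.choose_eq_zero_of_lt (show m+1 < m+2 by omega),
        Nat.choose_eq_zero_of_lt (show m < m+2 by omega),
        Nat.choose_eq_zero_of_lt (show m+1+1 < m+2+1 by omega),
        show m+1+1 = m+2 from rfl, Nat.choose_self]
      push_cast
      ring
  · have h1 := R1Q (m+1) k (by omega)
    have h2 := R1Q m k (by omega)
    have h3 := R2Q (m+1) k
    have h4 := R3Q k
    rw [show m+1+1 = m+2 from rfl] at h1 h3
    push_cast at h1 h2 h3 h4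
    have hkm : ((k:ℚ)) ≤ (m:ℚ)+1 := by exact_mod_cast hk
    have d1 : ((m:ℚ)+2-k) ≠ 0 := ne_of_gt (by linarith)
    have d2 : ((m:ℚ)+1) ≠ 0 := by positivity
    have d3 : ((k:ℚ)+1) ≠ 0 := by positivity
    have hx1 : (((m+2).choose k : ℕ) : ℚ)
        = ((m:ℚ)+2) * ((m+1).choose k : ℚ) / ((m:ℚ)+2-k) := by
      field_simp
      linear_combination h1
    have hx2 : ((m.choose k : ℕ) : ℚ)
        = ((m:ℚ)+1-k) * ((m+1).choose k : ℚ) / ((m:ℚ)+1) := by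
      field_simp
      linear_combination -h2
    have hx3 : (((m+2).choose (k+1) : ℕ) : ℚ)
        = ((m:ℚ)+2) * ((m+1).choose k : ℚ) / ((k:ℚ)+1) := by
      field_simp
      linear_combination -h3
    have hx4 : (((2*k+2).choose (k+1) : ℕ) : ℚ)
        = (2*(k:ℚ)+2) * (2*(k:ℚ)+1) * ((2*k).choose k : ℚ) / ((k:ℚ)+1)^2 := by
      rw [eq_div_iff (by positivity)]
      linear_combination h4
    simp only [tQ, HQ]
    rw [show 2*(k+1) = 2*k+2 from by omega, show m+1+1 = m+2 from rfl]
    push_cast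
    rw [hx1, hx2, hx3, hx4]
    field_simp
    ring

lemma aseq_eq_sum (n N : ℕ) (h : n < N) : aseq n = ∑ k ∈ Finset.range N, tQ n k := by
  rw [aseq]
  apply Finset.sum_subset
  · intro k hk; simp only [Finset.mem_range] at *; omega
  · intro k _ hk'
    simp only [Finset.mem_range, not_lt] at hk'
    simp [tQ, Nat.choose_eq_zero_of_lt (show n < k by omega)]

lemma rec_a (m : ℕ) :
    ((m:ℚ)+2)^2 * aseq (m+2)
      = (10*((m:ℚ)+1)^2+10*((m:ℚ)+1)+3) * aseq (m+1) - 9*((m:ℚ)+1)^2 * aseq m := by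
  have hsum : ∑ k ∈ Finset.range (m+4),
      (((m:ℚ)+2)^2 * ( ((m:ℚ)+2)^2 * tQ (m+2) k
        - (10*((m:ℚ)+1)^2+10*((m:ℚ)+1)+3) * tQ (m+1) k
        + 9*((m:ℚ)+1)^2 * tQ m k ))
      = HQ (m+1) (m+4) - HQ (m+1) 0 := by
    rw [Finset.sum_congr rfl (fun k _ => cert m k)]
    exact Finset.sum_range_sub (fun k => HQ (m+1) k) (m+4)
  have hH1 : HQ (m+1) (m+4) = 0 := by
    simp [HQ, Nat.choose_eq_zero_of_lt (show m+1+1 < m+4 by omega)]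
  have hH0 : HQ (m+1) 0 = 0 := by simp [HQ]
  rw [hH1, hH0, sub_zero] at hsum
  have e2 : aseq (m+2) = ∑ k ∈ Finset.range (m+4), tQ (m+2) k := aseq_eq_sum _ _ (by omega)
  have e1 : aseq (m+1) = ∑ k ∈ Finset.range (m+4), tQ (m+1) k := aseq_eq_sum _ _ (by omega)
  have e0 : aseq m = ∑ k ∈ Finset.range (m+4), tQ m k := aseq_eq_sum _ _ (by omega)
  have hne : (((m:ℚ)+2)^2) ≠ 0 := by positivity
  have expand : ∑ k ∈ Finset.range (m+4),
      (((m:ℚ)+2)^2 * ( ((m:ℚ)+2)^2 * tQ (m+2) k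
        - (10*((m:ℚ)+1)^2+10*((m:ℚ)+1)+3) * tQ (m+1) k
        + 9*((m:ℚ)+1)^2 * tQ m k ))
      = ((m:ℚ)+2)^2 * ( ((m:ℚ)+2)^2 * aseq (m+2)
        - (10*((m:ℚ)+1)^2+10*((m:ℚ)+1)+3) * aseq (m+1)
        + 9*((m:ℚ)+1)^2 * aseq m ) := by
    rw [e2, e1, e0]
    simp only [Finset.mul_sum, ← Finset.sum_sub_distrib, ← Finset.sum_add_distrib]
  rw [expand] at hsum
  rcases mul_eq_zero.mp hsum with h | h
  · exact absurd h hne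
  · linarith [h]

/-! ### ODE for gb -/

lemma coeff_gb (n : ℕ) : coeff (R := ℚ) n gb = aseq n := by
  rw [gb, coeff_mk]; rfl

lemma aseq0 : aseq 0 = 1 := by norm_num [aseq]
lemma aseq1 : aseq 1 = 3 := by
  norm_num [aseq, Finset.sum_range_succ]

lemma ODE1 :
    (d⁄dX ℚ (d⁄dX ℚ gb)) * X^1 + C (R := ℚ) (-10) * ((d⁄dX ℚ (d⁄dX ℚ gb)) * X^2)
      + C (R := ℚ) 9 * ((d⁄dX ℚ (d⁄dX ℚ gb)) * X^3)
      + d⁄dX ℚ gb + C (R := ℚ) (-20) * ((d⁄dX ℚ gb) * X^1) + C (R := ℚ) 27 * ((d⁄dX ℚ gb) * X^2)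
      + C (R := ℚ) (-3) * gb + C (R := ℚ) 9 * (gb * X^1) = 0 := by
  ext n
  simp only [map_add, coeff_C_mul, coeff_mul_X_pow', coeff_derivative, coeff_gb, map_zero]
  rcases n with _ | _ | _ | m
  · norm_num [aseq0, aseq1]
  · have h := rec_a 0
    norm_num [aseq0, aseq1] at h ⊢
    linarith [h]
  · have h := rec_a 1
    push_cast at h
    norm_num
    linarith [h]
  · have h := rec_a (m+2)
    push_cast at h
    have e1 : m+3-1 = m+2 := rfl
    have e2 : m+3-2 = m+1 := rfl
    have e3 : m+3-3 = m := rfl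
    simp only [show (1:ℕ) ≤ m+3 from by omega, show (2:ℕ) ≤ m+3 from by omega,
      show (3:ℕ) ≤ m+3 from by omega, if_true, e1, e2, e3, if_pos]
    push_cast
    linarith [h]

/-! ### the second-order operator and uniqueness -/

noncomputable def lode (y : R) : R :=
  (d⁄dX ℚ (d⁄dX ℚ y)) * X^1 + C (R := ℚ) (-10) * ((d⁄dX ℚ (d⁄dX ℚ y)) * X^3)
    + C (R := ℚ) 9 * ((d⁄dX ℚ (d⁄dX ℚ y)) * X^5)
    + d⁄dX ℚ y + C (R := ℚ) (-30) * ((d⁄dX ℚ y) * X^2) + C (R := ℚ) 45 * ((d⁄dX ℚ y) * X^4)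
    + C (R := ℚ) (-12) * (y * X^1) + C (R := ℚ) 36 * (y * X^3)

lemma zero_of_lode (y : R) (h0 : coeff (R := ℚ) 0 y = 0) (hL : lode y = 0) : y = 0 := by
  have key : ∀ n, ∀ j ≤ n, coeff (R := ℚ) j y = 0 := by
    intro n
    induction n with
    | zero => intro j hj; interval_cases j; exact h0
    | succ n ih =>
      intro j hj
      rcases Nat.lt_succ_iff_lt_or_eq.mp (Nat.lt_succ_of_le hj) with h | h
      · exact ih j (by omega)
      · subst h
        have hc := congrArg (coeff (R := ℚ) n) hL
        simp only [lode, map_add, coeff_C_mul, coeff_mul_X_pow', coeff_derivative,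
          map_zero] at hc
        by_cases hn5 : 5 ≤ n
        · obtain ⟨p, rfl⟩ : ∃ p, n = p + 5 := ⟨n - 5, by omega⟩
          rw [if_pos (show (1:ℕ) ≤ p+5 by omega), if_pos (show (2:ℕ) ≤ p+5 by omega),
            if_pos (show (3:ℕ) ≤ p+5 by omega), if_pos (show (4:ℕ) ≤ p+5 by omega),
            if_pos (show (5:ℕ) ≤ p+5 by omega)] at hc
          have e1 : p+5-1 = p+4 := rfl
          have e2 : p+5-2 = p+3 := rfl
          have e3 : p+5-3 = p+2 := rfl
          have e4 : p+5-4 = p+1 := rfl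
          have e5 : p+5-5 = p := rfl
          rw [e1, e2, e3, e4, e5] at hc
          norm_num at hc
          rw [ih (p+4) (by omega), ih (p+2) (by omega)] at hc
          have hfin : coeff (R := ℚ) (p+6) y * ((p:ℚ)+6)^2 = 0 := by
            push_cast at hc ⊢
            linear_combination hc
          have hne : ((p:ℚ)+6)^2 ≠ 0 := by positivity
          exact (mul_eq_zero.mp hfin).resolve_right hne
        · have hcc : constantCoeff (R := ℚ) y = 0 := by simpa using h0
          interval_cases n
          · norm_num at hc
            exact hc
          · norm_num [hcc] at hc
            show coeff (R := ℚ) 2 y = 0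
            linarith [hc]
          · norm_num [hcc, ih 1 (by omega)] at hc
            show coeff (R := ℚ) 3 y = 0
            linarith [hc]
          · norm_num [hcc, ih 2 (by omega)] at hc
            show coeff (R := ℚ) 4 y = 0
            linarith [hc]
          · norm_num [hcc, ih 1 (by omega), ih 3 (by omega)] at hc
            show coeff (R := ℚ) 5 y = 0
            linarith [hc]
  ext n
  simpa using key n n (le_refl n)

lemma lode_sub (y z : R) : lode (y - z) = lode y - lode z := by
  simp only [lode, map_sub]
  ring

lemma Dnum (n : ℕ) [n.AtLeastTwo] : d⁄dX ℚ (OfNat.ofNat n : R) = 0 := by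
  rw [← Nat.cast_ofNat]
  exact Derivation.map_natCast _ n

lemma D3 : d⁄dX ℚ (3 : R) = 0 := by
  rw [show (3:R) = ((3:ℕ):R) by norm_num]
  exact Derivation.map_natCast _ 3

lemma D2 : d⁄dX ℚ (2 : R) = 0 := by
  rw [show (2:R) = ((2:ℕ):R) by norm_num]
  exact Derivation.map_natCast _ 2

end PsAux

open PsAux in
theorem functional_equation_gb :
    psComp gb (X ^ 2)
      = (1 + 3 * X : PowerSeries ℚ)⁻¹ * psComp gb (X * (1 - X) * (1 + 3 * X)⁻¹) := by
  set u : R := (1 + 3 * X : PowerSeries ℚ)⁻¹ with hu_def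
  have hu : (1 + 3 * X : R) * u = 1 := by
    apply PowerSeries.mul_inv_cancel
    simp
  set w : R := X * (1 - X) * u with hw_def
  have hw : constantCoeff (R := ℚ) w = 0 := by
    simp [hw_def]
  have hg2 : constantCoeff (R := ℚ) ((X : R)^2) = 0 := by simp
  set P : R := psComp gb w with hP_def
  set Q : R := psComp (d⁄dX ℚ gb) w with hQ_def
  set Rr : R := psComp (d⁄dX ℚ (d⁄dX ℚ gb)) w with hRr_def
  set Pc : R := psComp gb (X^2) with hPc_def
  set Qc : R := psComp (d⁄dX ℚ gb) (X^2) with hQc_def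
  set Rc : R := psComp (d⁄dX ℚ (d⁄dX ℚ gb)) (X^2) with hRc_def
  -- the substituted ODE relation, for both substitutions
  have hODE1nested :
      X * (d⁄dX ℚ (d⁄dX ℚ gb)) + C (R := ℚ) (-10) * (X * (X * (d⁄dX ℚ (d⁄dX ℚ gb))))
        + C (R := ℚ) 9 * (X * (X * (X * (d⁄dX ℚ (d⁄dX ℚ gb)))))
        + d⁄dX ℚ gb + C (R := ℚ) (-20) * (X * (d⁄dX ℚ gb)) + C (R := ℚ) 27 * (X * (X * (d⁄dX ℚ gb)))
        + C (R := ℚ) (-3) * gb + C (R := ℚ) 9 * (X * gb) = 0 := by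
    linear_combination ODE1
  have hS : w * Rr + C (R := ℚ) (-10) * (w * (w * Rr)) + C (R := ℚ) 9 * (w * (w * (w * Rr)))
      + Q + C (R := ℚ) (-20) * (w * Q) + C (R := ℚ) 27 * (w * (w * Q))
      + C (R := ℚ) (-3) * P + C (R := ℚ) 9 * (w * P) = 0 := by
    have h1 : psComp (X * (d⁄dX ℚ (d⁄dX ℚ gb)) + C (R := ℚ) (-10) * (X * (X * (d⁄dX ℚ (d⁄dX ℚ gb))))
        + C (R := ℚ) 9 * (X * (X * (X * (d⁄dX ℚ (d⁄dX ℚ gb)))))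
        + d⁄dX ℚ gb + C (R := ℚ) (-20) * (X * (d⁄dX ℚ gb)) + C (R := ℚ) 27 * (X * (X * (d⁄dX ℚ gb)))
        + C (R := ℚ) (-3) * gb + C (R := ℚ) 9 * (X * gb)) w = psComp 0 w := by
      rw [hODE1nested]
    simpa only [psComp_add, psComp_C_mul, psComp_X_mul hw, psComp_zero, ← hP_def, ← hQ_def,
      ← hRr_def] using h1
  have hSc : (X:R)^2 * Rc + C (R := ℚ) (-10) * ((X:R)^2 * ((X:R)^2 * Rc))
      + C (R := ℚ) 9 * ((X:R)^2 * ((X:R)^2 * ((X:R)^2 * Rc)))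
      + Qc + C (R := ℚ) (-20) * ((X:R)^2 * Qc) + C (R := ℚ) 27 * ((X:R)^2 * ((X:R)^2 * Qc))
      + C (R := ℚ) (-3) * Pc + C (R := ℚ) 9 * ((X:R)^2 * Pc) = 0 := by
    have h1 : psComp (X * (d⁄dX ℚ (d⁄dX ℚ gb)) + C (R := ℚ) (-10) * (X * (X * (d⁄dX ℚ (d⁄dX ℚ gb))))
        + C (R := ℚ) 9 * (X * (X * (X * (d⁄dX ℚ (d⁄dX ℚ gb)))))
        + d⁄dX ℚ gb + C (R := ℚ) (-20) * (X * (d⁄dX ℚ gb)) + C (R := ℚ) 27 * (X * (X * (d⁄dX ℚ gb)))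
        + C (R := ℚ) (-3) * gb + C (R := ℚ) 9 * (X * gb)) ((X:R)^2) = psComp 0 ((X:R)^2) := by
      rw [hODE1nested]
    simpa only [psComp_add, psComp_C_mul, psComp_X_mul hg2, psComp_zero, ← hPc_def, ← hQc_def,
      ← hRc_def] using h1
  -- derivatives
  have hDu : d⁄dX ℚ u = -3 * u^2 := by
    have hd : d⁄dX ℚ ((1 + 3 * X : R) * u) = 0 := by
      rw [hu]; exact Derivation.map_one_eq_zero _
    rw [Derivation.leibniz] at hd
    simp only [smul_eq_mul, map_add, derivative_X, Derivation.leibniz, Dnum, D2, D3,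
      Derivation.map_one_eq_zero, smul_eq_mul, mul_zero, zero_add, add_zero, mul_one] at hd
    linear_combination u * hd - (d⁄dX ℚ u) * hu
  have hDw : d⁄dX ℚ w = (1 - 2*X - 3*X^2) * u^2 := by
    have hDq : d⁄dX ℚ ((X : R) * (1 - X)) = 1 - 2*X := by
      rw [Derivation.leibniz]
      simp only [smul_eq_mul, map_sub, derivative_X, Derivation.map_one_eq_zero]
      ring
    rw [hw_def, Derivation.leibniz, hDq, hDu]
    simp only [smul_eq_mul]
    linear_combination (-(1 - 2*X) * u) * hu
  have hDP : d⁄dX ℚ P = Q * ((1 - 2*X - 3*X^2) * u^2) := by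
    rw [hP_def, psComp_deriv hw gb, ← hQ_def, hDw]
  have hDQ : d⁄dX ℚ Q = Rr * ((1 - 2*X - 3*X^2) * u^2) := by
    rw [hQ_def, psComp_deriv hw (d⁄dX ℚ gb), ← hRr_def, hDw]
  have hDB : d⁄dX ℚ (u * P) = -3 * u^2 * P + (1 - 2*X - 3*X^2) * u^3 * Q := by
    rw [Derivation.leibniz, hDu, hDP]
    simp only [smul_eq_mul]
    ring
  have hD2B : d⁄dX ℚ (-3 * u^2 * P + (1 - 2*X - 3*X^2) * u^3 * Q)
      = 18 * u^3 * P + ((-12) * (1 - 2*X - 3*X^2) * u^4 + (-2 - 6*X) * u^3) * Q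
        + (1 - 2*X - 3*X^2)^2 * u^5 * Rr := by
    rw [map_add, Derivation.leibniz, Derivation.leibniz]
    simp only [smul_eq_mul, Derivation.leibniz, Derivation.leibniz_pow, smul_eq_mul,
      map_sub, map_add, derivative_X, Dnum, D2, D3, Derivation.map_one_eq_zero, map_neg,
      hDu, hDP, hDQ, nsmul_eq_mul]
    push_cast
    ring
  have hDX2 : d⁄dX ℚ ((X:R)^2) = 2 * X := by
    rw [Derivation.leibniz_pow]
    simp [smul_eq_mul]
  have hDPc : d⁄dX ℚ Pc = Qc * (2 * X) := by
    rw [hPc_def, psComp_deriv hg2 gb, ← hQc_def, hDX2]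
  have hDQc : d⁄dX ℚ Qc = Rc * (2 * X) := by
    rw [hQc_def, psComp_deriv hg2 (d⁄dX ℚ gb), ← hRc_def, hDX2]
  have hD2Pc : d⁄dX ℚ (Qc * (2 * X)) = 4 * X^2 * Rc + 2 * Qc := by
    rw [Derivation.leibniz, hDQc]
    simp only [smul_eq_mul, Derivation.leibniz, derivative_X, Dnum, D2, D3, smul_eq_mul]
    ring
  -- lode vanishes on both sides
  have hLodeC : lode Pc = 0 := by
    rw [lode, hDPc, hD2Pc]
    simp only [map_neg, map_ofNat] at hSc ⊢
    linear_combination (4 * (X:R)) * hSc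
  have hLodeB : lode (u * P) = 0 := by
    rw [lode, hDB, hD2B]
    simp only [map_neg, map_ofNat] at hS ⊢
    linear_combination ((1+X)*(1-3*X)*u) * hS + (u*Q + (-3:R)*u*P + u^2*Q + (-2:R)*X*u*Q + (18:R)*X*u*P + X*u^2*Rr + (-19:R)*X*u^2*Q + (18:R)*X*u^2*P + X*u^3*Rr + (-12:R)*X*u^3*Q + X*u^4*Rr + (-3:R)*X^2*u*Q + (9:R)*X^2*u*P + (-3:R)*X^2*u^2*Rr + (51:R)*X^2*u^2*Q + (-54:R)*X^2*u^2*P + (-10:R)*X^2*u^3*Rr + (60:R)*X^2*u^3*Q + (-7:R)*X^2*u^4*Rr + (-36:R)*X^3*u*P + (-1:R)*X^3*u^2*Rr + (11:R)*X^3*u^2*Q + (-18:R)*X^3*u^2*P + (30:R)*X^3*u^3*Rr + (-24:R)*X^3*u^3*Q + (9:R)*X^3*u^4*Rr + (3:R)*X^4*u^2*Rr + (-60:R)*X^4*u^2*Q + (54:R)*X^4*u^2*P + (-20:R)*X^4*u^3*Rr + (-168:R)*X^4*u^3*Q + (25:R)*X^4*u^4*Rr + (-31:R)*X^5*u^3*Rr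 + (36:R)*X^5*u^3*Q + (-37:R)*X^5*u^4*Rr + (30:R)*X^6*u^3*Rr + (108:R)*X^6*u^3*Q + (-45:R)*X^6*u^4*Rr + (27:R)*X^7*u^4*Rr + (27:R)*X^8*u^4*Rr) * hu
  -- initial coefficient
  have hy0 : coeff (R := ℚ) 0 (Pc - u * P) = 0 := by
    rw [map_sub, hPc_def, coeff_zero_psComp]
    have hcu : constantCoeff (R := ℚ) u = 1 := by
      have := congrArg (constantCoeff (R := ℚ)) hu
      simp only [map_mul, map_one, map_add, constantCoeff_X, mul_zero, add_zero,
        constantCoeff_one] at this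
      simpa using this
    have : coeff (R := ℚ) 0 (u * P) = 1 := by
      rw [coeff_zero_eq_constantCoeff, map_mul, hcu, one_mul, ← coeff_zero_eq_constantCoeff,
        hP_def, coeff_zero_psComp, coeff_gb, aseq0]
    rw [this, coeff_gb, aseq0]
    norm_num
  have hyL : lode (Pc - u * P) = 0 := by
    rw [lode_sub, hLodeC, hLodeB, sub_zero]
  have hz := zero_of_lode _ hy0 hyL
  have hfinal : Pc = u * P := by
    have := sub_eq_zero.mp hz
    exact this
  exact hfinal
end

section
/- The formal power series f_3(x) = (∑_{n≥0} C(2n,n) C(3n,n) x^n)^2 satisfies, as an identity of formal power series in z, (1+4z)^{-2} · f_3(z/(1+4z)^3) = (1−2z)^{-2} · f_3(z^2/(1−2z)^3). -/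
open PowerSeries

noncomputable def f3 : PowerSeries ℚ :=
  (PowerSeries.mk fun n => ((2 * n).choose n : ℚ) * ((3 * n).choose n : ℚ)) ^ 2

section psCompAPI

variable {u : PowerSeries ℚ}

lemma coeff_pow_eq_zero (hu : constantCoeff (R := ℚ) u = 0) {n k : ℕ} (h : n < k) :
    coeff (R := ℚ) n (u ^ k) = 0 := by
  obtain ⟨w, hw⟩ := (PowerSeries.X_dvd_iff).mpr hu
  rw [hw, mul_pow, coeff_X_pow_mul' (w ^ k) k n, if_neg (by omega)]

lemma coeff_psComp (hu : constantCoeff (R := ℚ) u = 0) (f : PowerSeries ℚ) {n m : ℕ} (h : n ≤ m) :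
    coeff (R := ℚ) n (psComp f u) = coeff (R := ℚ) n (Polynomial.aeval u (trunc (m + 1) f)) := by
  rw [psComp, coeff_mk,
    Polynomial.aeval_eq_sum_range' (natDegree_trunc_lt f m) u, map_sum]
  rw [show (∑ i ∈ Finset.range (m+1), coeff (R := ℚ) n ((trunc (m+1) f).coeff i • u ^ i))
      = ∑ i ∈ Finset.range (m+1), coeff (R := ℚ) i f * coeff (R := ℚ) n (u ^ i) from
    Finset.sum_congr rfl fun i hi => by
      rw [Finset.mem_range] at hi
      rw [map_smul, coeff_trunc, if_pos hi, smul_eq_mul]]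
  refine Finset.sum_subset (Finset.range_subset_range.mpr (by omega)) fun i hi hni => ?_
  rw [Finset.mem_range] at hi
  rw [Finset.mem_range, not_lt] at hni
  rw [coeff_pow_eq_zero hu (by omega), mul_zero]

lemma coeff_aeval_eq_zero (hu : constantCoeff (R := ℚ) u = 0) {P : Polynomial ℚ} {n : ℕ}
    (h : ∀ i ≤ n, P.coeff i = 0) : coeff (R := ℚ) n (Polynomial.aeval u P) = 0 := by
  rw [Polynomial.aeval_eq_sum_range, map_sum]
  refine Finset.sum_eq_zero fun i _ => ?_
  rw [map_smul]
  by_cases hin : i ≤ n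
  · rw [h i hin, zero_smul]
  · rw [coeff_pow_eq_zero hu (by omega), smul_zero]

lemma psComp_mul (hu : constantCoeff (R := ℚ) u = 0) (f g : PowerSeries ℚ) :
    psComp (f * g) u = psComp f u * psComp g u := by
  ext n
  rw [coeff_psComp hu (f*g) (le_refl n)]
  have key : coeff (R := ℚ) n (Polynomial.aeval u (trunc (n+1) (f*g)))
      = coeff (R := ℚ) n (Polynomial.aeval u (trunc (n+1) f * trunc (n+1) g)) := by
    have hdiff : ∀ i ≤ n, (trunc (n+1) (f*g) - trunc (n+1) f * trunc (n+1) g).coeff i = 0 := by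
      intro i hi
      have h2 : (trunc (n+1) f * trunc (n+1) g).coeff i
          = coeff (R := ℚ) i ((trunc (n+1) f : PowerSeries ℚ) * (trunc (n+1) g : PowerSeries ℚ)) := by
        rw [← Polynomial.coe_mul, Polynomial.coeff_coe]
      rw [Polynomial.coeff_sub, coeff_trunc, if_pos (by omega), h2,
        coeff_mul_eq_coeff_trunc_mul_trunc₂ f g (show i < n+1 by omega) (show i < n+1 by omega),
        sub_self]
    have h0 := coeff_aeval_eq_zero hu hdiff
    rw [map_sub, map_sub, sub_eq_zero] at h0
    exact h0
  rw [key, map_mul, PowerSeries.coeff_mul, PowerSeries.coeff_mul]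
  refine Finset.sum_congr rfl fun p hp => ?_
  rw [Finset.HasAntidiagonal.mem_antidiagonal] at hp
  rw [← coeff_psComp hu f (show p.1 ≤ n by omega), ← coeff_psComp hu g (show p.2 ≤ n by omega)]

lemma psComp_add (f g u : PowerSeries ℚ) :
    psComp (f + g) u = psComp f u + psComp g u := by
  ext n
  simp only [psComp, coeff_mk, map_add, ← Finset.sum_add_distrib, add_mul]

lemma psComp_sub (f g u : PowerSeries ℚ) :
    psComp (f - g) u = psComp f u - psComp g u := by
  ext n
  simp only [psComp, coeff_mk, map_sub, ← Finset.sum_sub_distrib, sub_mul]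

lemma psComp_C (c : ℚ) (u : PowerSeries ℚ) : psComp (C (R := ℚ) c) u = C (R := ℚ) c := by
  ext n
  rw [psComp, coeff_mk, Finset.sum_eq_single 0]
  · rw [coeff_C]; simp [PowerSeries.coeff_C]
  · intro i _ hi
    rw [coeff_C, if_neg hi, zero_mul]
  · simp

lemma psComp_X (hu : constantCoeff (R := ℚ) u = 0) : psComp X u = u := by
  ext n
  rw [psComp, coeff_mk, Finset.sum_eq_single 1]
  · simp
  · intro i _ hi
    rw [coeff_X, if_neg hi, zero_mul]
  · intro h
    rw [Finset.mem_range, not_lt] at h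
    have hn : n = 0 := by omega
    subst hn
    simp [coeff_zero_eq_constantCoeff, hu]

lemma psComp_zero (u : PowerSeries ℚ) : psComp 0 u = 0 := by
  ext n; simp [psComp]

lemma derivative_aeval (u : PowerSeries ℚ) (P : Polynomial ℚ) :
    d⁄dX ℚ (Polynomial.aeval u P) = Polynomial.aeval u (Polynomial.derivative P) * d⁄dX ℚ u := by
  induction P using Polynomial.induction_on' with
  | add p q hp hq => simp [hp, hq, add_mul]
  | monomial n a =>
    cases n with
    | zero =>
      simp [Polynomial.aeval_monomial]
    | succ m =>
      rw [Polynomial.aeval_monomial, Polynomial.derivative_monomial, Polynomial.aeval_monomial]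
      rw [Derivation.leibniz, Derivation.leibniz_pow]
      simp only [map_mul, Polynomial.aeval_C]
      simp only [smul_eq_mul, Nat.add_sub_cancel]
      have : d⁄dX ℚ ((algebraMap ℚ ℚ⟦X⟧) a) = 0 := by
        rw [show (algebraMap ℚ ℚ⟦X⟧) a = C (R := ℚ) a from rfl, derivative_C]
      rw [this]
      push_cast
      ring

lemma psComp_derivative (hu : constantCoeff (R := ℚ) u = 0) (f : PowerSeries ℚ) :
    d⁄dX ℚ (psComp f u) = psComp (d⁄dX ℚ f) u * d⁄dX ℚ u := by
  ext n
  rw [coeff_derivative, coeff_psComp hu f (le_refl (n+1)), ← coeff_derivative, derivative_aeval,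
    ← trunc_derivative f (n+1)]
  rw [PowerSeries.coeff_mul, PowerSeries.coeff_mul]
  refine Finset.sum_congr rfl fun p hp => ?_
  rw [Finset.HasAntidiagonal.mem_antidiagonal] at hp
  have hp1 : p.1 ≤ n := by omega
  rw [coeff_psComp hu (d⁄dX ℚ f) hp1]

end psCompAPI

section hhODE

noncomputable def tt (n : ℕ) : ℚ := ((2 * n).choose n : ℚ) * ((3 * n).choose n : ℚ)
noncomputable def hh : PowerSeries ℚ := PowerSeries.mk tt

lemma choose2_cast (m : ℕ) :
    ((2*m).choose m : ℚ) = (Nat.factorial (2*m)) / (Nat.factorial m * Nat.factorial m) := by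
  rw [Nat.cast_choose ℚ (by omega : m ≤ 2*m), show 2*m - m = m by omega]

lemma choose3_cast (m : ℕ) :
    ((3*m).choose m : ℚ) = (Nat.factorial (3*m)) / (Nat.factorial m * Nat.factorial (2*m)) := by
  rw [Nat.cast_choose ℚ (by omega : m ≤ 3*m), show 3*m - m = 2*m by omega]

lemma fact_ne_zero' (m : ℕ) : ((Nat.factorial m : ℚ)) ≠ 0 :=
  Nat.cast_ne_zero.mpr (Nat.factorial_ne_zero m)

lemma tt_rec (n : ℕ) :
    ((n:ℚ)+1)^2 * tt (n+1) = 3*(3*(n:ℚ)+1)*(3*(n:ℚ)+2) * tt n := by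
  unfold tt
  rw [choose2_cast (n+1), choose3_cast (n+1), choose2_cast n, choose3_cast n]
  rw [show 2*(n+1) = (2*n+1)+1 by ring, show 3*(n+1) = ((3*n+1)+1)+1 by ring]
  simp only [Nat.factorial_succ]
  push_cast
  have h1 := fact_ne_zero' n
  have h2 := fact_ne_zero' (2*n)
  have h3 := fact_ne_zero' (3*n)
  field_simp
  ring

lemma coeffXmul (f : PowerSeries ℚ) (n : ℕ) :
    coeff (R := ℚ) n (X * f) = if n = 0 then 0 else coeff (R := ℚ) (n-1) f := by
  cases n with
  | zero => simp [coeff_zero_eq_constantCoeff]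
  | succ m => simp [coeff_succ_X_mul]

lemma hh_ODE :
    X * d⁄dX ℚ (d⁄dX ℚ hh) - C (R := ℚ) 27 * (X * (X * d⁄dX ℚ (d⁄dX ℚ hh)))
      + d⁄dX ℚ hh - C (R := ℚ) 54 * (X * d⁄dX ℚ hh) - C (R := ℚ) 6 * hh = 0 := by
  ext n
  match n with
  | 0 =>
    simp only [map_sub, map_add, coeff_C_mul, coeffXmul, coeff_derivative, map_zero,
      if_pos rfl, hh, coeff_mk, constantCoeff_mk, coeff_zero_eq_constantCoeff]
    have hr := tt_rec 0
    push_cast at hr ⊢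
    linear_combination hr
  | 1 =>
    simp only [map_sub, map_add, coeff_C_mul, coeffXmul, coeff_derivative, map_zero]
    norm_num
    simp only [hh, coeff_mk, constantCoeff_mk, coeff_zero_eq_constantCoeff, coeff_derivative]
    have hr := tt_rec 1
    push_cast at hr ⊢
    linear_combination hr
  | (k+2) =>
    simp only [map_sub, map_add, coeff_C_mul, coeffXmul, coeff_derivative, map_zero,
      if_neg (show ¬ (k+2 = 0) by omega), if_neg (show ¬ (k+1 = 0) by omega),
      show k+2-1 = k+1 from rfl, show k+1-1 = k from rfl]
    simp only [hh, coeff_mk, coeff_derivative]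
    rw [show k+1+1 = k+2 from rfl, show k+2+1 = k+3 from rfl, show k+1+1+1 = k+3 from rfl]
    have hr := tt_rec (k+2)
    rw [show k+2+1 = k+3 from rfl] at hr
    push_cast at hr ⊢
    linear_combination hr

lemma psComp_ofNat (m : ℕ) [m.AtLeastTwo] (u : PowerSeries ℚ) :
    psComp (no_index (OfNat.ofNat m) : PowerSeries ℚ) u = OfNat.ofNat m := by
  rw [← map_ofNat (C (R := ℚ)) m, psComp_C]

lemma psComp_hh_ODE {u : PowerSeries ℚ} (hu : constantCoeff (R := ℚ) u = 0) :
    u * psComp (d⁄dX ℚ (d⁄dX ℚ hh)) u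
      - 27*(u*(u * psComp (d⁄dX ℚ (d⁄dX ℚ hh)) u))
      + psComp (d⁄dX ℚ hh) u - 54*(u * psComp (d⁄dX ℚ hh) u) - 6 * psComp hh u = 0 := by
  have h := congrArg (fun f => psComp f u) hh_ODE
  simp only [psComp_sub, psComp_add, psComp_mul hu, psComp_X hu, psComp_C, psComp_zero,
    map_ofNat, psComp_ofNat] at h
  exact h

end hhODE

section Dhelpers

lemma D_ofNat (n : ℕ) [n.AtLeastTwo] :
    d⁄dX ℚ (no_index (OfNat.ofNat n) : PowerSeries ℚ) = 0 := by
  rw [← map_ofNat (C (R := ℚ)) n, derivative_C]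

lemma coeff_ofNat_mul (n : ℕ) (m : ℕ) [m.AtLeastTwo] (f : PowerSeries ℚ) :
    coeff (R := ℚ) n ((no_index (OfNat.ofNat m) : PowerSeries ℚ) * f)
      = (OfNat.ofNat m : ℚ) * coeff (R := ℚ) n f := by
  rw [← map_ofNat (C (R := ℚ)) m, coeff_C_mul]

end Dhelpers

lemma ode_unique {W : PowerSeries ℚ}
    (hW : X*(1+X)*(1-8*X) * d⁄dX ℚ (d⁄dX ℚ W) + (1-14*X-24*X^2) * d⁄dX ℚ W
      - 2*(1+4*X) * W = 0)
    (h0 : coeff (R := ℚ) 0 W = 0) : W = 0 := by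
  have h0' : constantCoeff (R := ℚ) W = 0 := by rw [← coeff_zero_eq_constantCoeff]; exact h0
  have hW2 : X * (d⁄dX ℚ (d⁄dX ℚ W)) - 7*(X*(X*(d⁄dX ℚ (d⁄dX ℚ W))))
      - 8*(X*(X*(X*(d⁄dX ℚ (d⁄dX ℚ W)))))
      + d⁄dX ℚ W - 14*(X*(d⁄dX ℚ W)) - 24*(X*(X*(d⁄dX ℚ W))) - 2*W - 8*(X*W) = 0 := by
    linear_combination hW
  have h1 : coeff (R := ℚ) 1 W = 0 := by
    have e := congrArg (coeff (R := ℚ) 0) hW2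
    simp only [map_sub, map_add, coeff_ofNat_mul, coeffXmul, coeff_derivative, map_zero,
      if_pos rfl] at e
    push_cast at e
    linear_combination e + 2*h0
  have h2 : coeff (R := ℚ) 2 W = 0 := by
    have e := congrArg (coeff (R := ℚ) 1) hW2
    simp only [map_sub, map_add, coeff_ofNat_mul, coeffXmul, coeff_derivative, map_zero,
      if_neg (show ¬((1:ℕ)=0) by omega), if_pos rfl, show (1:ℕ)-1 = 0 from rfl] at e
    norm_num at e
    have hz : (4:ℚ) * coeff (R := ℚ) 2 W = 0 := by
      linear_combination e + 16*h1 + 8*h0'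
    linarith
  have h3 : coeff (R := ℚ) 3 W = 0 := by
    have e := congrArg (coeff (R := ℚ) 2) hW2
    simp only [map_sub, map_add, coeff_ofNat_mul, coeffXmul, coeff_derivative, map_zero,
      if_neg (show ¬((2:ℕ)=0) by omega), if_neg (show ¬((1:ℕ)=0) by omega), if_pos rfl,
      show (2:ℕ)-1 = 1 from rfl, show (1:ℕ)-1 = 0 from rfl] at e
    norm_num at e
    have hz : (9:ℚ) * coeff (R := ℚ) 3 W = 0 := by
      linear_combination e + 44*h2 + 32*h1
    linarith
  have step : ∀ k : ℕ, coeff (R := ℚ) (k+1) W = 0 → coeff (R := ℚ) (k+2) W = 0 → coeff (R := ℚ) (k+3) W = 0 →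
      coeff (R := ℚ) (k+4) W = 0 := by
    intro k hk1 hk2 hk3
    have e := congrArg (coeff (R := ℚ) (k+3)) hW2
    simp only [map_sub, map_add, coeff_ofNat_mul, coeffXmul, coeff_derivative, map_zero,
      if_neg (show ¬(k+3=0) by omega), if_neg (show ¬(k+2=0) by omega),
      if_neg (show ¬(k+1=0) by omega),
      show k+3-1=k+2 from rfl, show k+2-1=k+1 from rfl, show k+1-1=k from rfl] at e
    simp only [show k+1+1=k+2 from rfl, show k+2+1=k+3 from rfl, show k+3+1=k+4 from rfl] at e
    rw [hk2, hk3] at e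
    have hz : ((k:ℚ)+4)^2 * coeff (R := ℚ) (k+4) W = 0 := by
      push_cast at e
      linear_combination e
    have hne : ((k:ℚ)+4)^2 ≠ 0 := by positivity
    exact (mul_eq_zero.mp hz).resolve_left hne
  have all : ∀ n : ℕ, coeff (R := ℚ) (n+1) W = 0 ∧ coeff (R := ℚ) (n+2) W = 0 ∧ coeff (R := ℚ) (n+3) W = 0 := by
    intro n
    induction n with
    | zero => exact ⟨h1, h2, h3⟩
    | succ m ih => exact ⟨ih.2.1, ih.2.2, step m ih.1 ih.2.1 ih.2.2⟩
  ext n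
  rw [map_zero]
  cases n with
  | zero => exact h0
  | succ m => exact (all m).1

lemma pullback_F {ia S P1 P2 : PowerSeries ℚ}
    (hia : (1+4*X) * ia = 1)
    (hrel : (X*ia^3) * P2 - 27*((X*ia^3)*((X*ia^3)*P2)) + P1 - 54*((X*ia^3)*P1) - 6*S = 0)
    (hS1 : d⁄dX ℚ S = P1 * d⁄dX ℚ (X*ia^3))
    (hS2 : d⁄dX ℚ P1 = P2 * d⁄dX ℚ (X*ia^3)) :
    X*(1+X)*(1-8*X) * d⁄dX ℚ (d⁄dX ℚ (ia*S)) + (1-14*X-24*X^2) * d⁄dX ℚ (ia*S)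
      - 2*(1+4*X) * (ia*S) = 0 := by
  have hDa : d⁄dX ℚ ((1:PowerSeries ℚ) + 4*X) = 4 := by
    rw [map_add, Derivation.map_one_eq_zero, Derivation.leibniz, D_ofNat, derivative_X]
    simp [smul_eq_mul]
  have hDia : d⁄dX ℚ ia = -4*ia^2 := by
    have h1 := congrArg (d⁄dX ℚ) hia
    rw [Derivation.leibniz, Derivation.map_one_eq_zero, smul_eq_mul, smul_eq_mul, hDa] at h1
    linear_combination ia * h1 - d⁄dX ℚ ia * hia
  have hDu : d⁄dX ℚ (X*ia^3) = ia^3 - 12*X*ia^4 := by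
    rw [Derivation.leibniz, Derivation.leibniz_pow, hDia, derivative_X]
    simp only [smul_eq_mul, nsmul_eq_mul, Nat.cast_ofNat]
    norm_num
    ring
  have hDF : d⁄dX ℚ (ia*S) = -4*ia^2*S + ia^4*P1 - 12*X*ia^5*P1 := by
    rw [Derivation.leibniz, smul_eq_mul, smul_eq_mul, hDia, hS1, hDu]
    ring
  have hDDF : d⁄dX ℚ (d⁄dX ℚ (ia*S)) = 32*ia^3*S - 32*ia^5*P1 + 288*X*ia^6*P1
      + ia^7*P2 - 24*X*ia^8*P2 + 144*X^2*ia^9*P2 := by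
    rw [hDF]
    rw [map_sub, map_add]
    simp only [Derivation.leibniz, Derivation.leibniz_pow, derivative_X, D_ofNat, map_neg,
      hDia, hS1, hS2, hDu, smul_eq_mul, nsmul_eq_mul, Nat.cast_ofNat]
    norm_num
    ring
  rw [hDDF, hDF]
  linear_combination (ia^3*(1-8*X)) * hrel +
    (2*ia*S + 6*ia^2*S + ia^3*P1 + 8*X*ia*S + (-40)*X*ia^2*S + (-8)*X*ia^3*P1 + 10*X*ia^4*P1
      + 54*X*ia^5*P1 + X*ia^6*P2 + (-64)*X^2*ia^2*S + (-8)*X^2*ia^4*P1 + (-360)*X^2*ia^5*P1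
      + (-8)*X^2*ia^6*P2 + 3*X^2*ia^7*P2 + 27*X^2*ia^8*P2 + (-576)*X^3*ia^5*P1
      + (-24)*X^3*ia^7*P2 + (-180)*X^3*ia^8*P2 + (-288)*X^4*ia^8*P2) * hia

lemma pullback_G {ib S P1 P2 : PowerSeries ℚ}
    (hib : (1-2*X) * ib = 1)
    (hrel : (X^2*ib^3) * P2 - 27*((X^2*ib^3)*((X^2*ib^3)*P2)) + P1 - 54*((X^2*ib^3)*P1)
      - 6*S = 0)
    (hS1 : d⁄dX ℚ S = P1 * d⁄dX ℚ (X^2*ib^3))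
    (hS2 : d⁄dX ℚ P1 = P2 * d⁄dX ℚ (X^2*ib^3)) :
    X*(1+X)*(1-8*X) * d⁄dX ℚ (d⁄dX ℚ (ib*S)) + (1-14*X-24*X^2) * d⁄dX ℚ (ib*S)
      - 2*(1+4*X) * (ib*S) = 0 := by
  have hDb : d⁄dX ℚ ((1:PowerSeries ℚ) - 2*X) = -2 := by
    rw [map_sub, Derivation.map_one_eq_zero, Derivation.leibniz, D_ofNat, derivative_X]
    simp [smul_eq_mul]
  have hDib : d⁄dX ℚ ib = 2*ib^2 := by
    have h1 := congrArg (d⁄dX ℚ) hib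
    rw [Derivation.leibniz, Derivation.map_one_eq_zero, smul_eq_mul, smul_eq_mul, hDb] at h1
    linear_combination ib * h1 - d⁄dX ℚ ib * hib
  have hDv : d⁄dX ℚ (X^2*ib^3) = 2*X*ib^3 + 6*X^2*ib^4 := by
    rw [Derivation.leibniz]
    simp only [Derivation.leibniz_pow, derivative_X, hDib, smul_eq_mul, nsmul_eq_mul,
      Nat.cast_ofNat]
    norm_num
    ring
  have hDG : d⁄dX ℚ (ib*S) = 2*ib^2*S + 2*X*ib^4*P1 + 6*X^2*ib^5*P1 := by
    rw [Derivation.leibniz, smul_eq_mul, smul_eq_mul, hDib, hS1, hDv]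
    ring
  have hDDG : d⁄dX ℚ (d⁄dX ℚ (ib*S)) = 8*ib^3*S + 2*ib^4*P1 + 32*X*ib^5*P1
      + 72*X^2*ib^6*P1 + 4*X^2*ib^7*P2 + 24*X^3*ib^8*P2 + 36*X^4*ib^9*P2 := by
    rw [hDG]
    rw [map_add, map_add]
    simp only [Derivation.leibniz, Derivation.leibniz_pow, derivative_X, D_ofNat, map_neg,
      hDib, hS1, hS2, hDv, smul_eq_mul, nsmul_eq_mul, Nat.cast_ofNat]
    norm_num
    ring
  rw [hDDG, hDG]
  linear_combination (4*X*(1+X)*ib^3) * hrel +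
    (2*ib*S + 8*X*ib*S + 32*X*ib^2*S + 4*X*ib^3*P1 + 32*X^2*ib^2*S + 4*X^2*ib^3*P1
      + 38*X^2*ib^4*P1 + 56*X^3*ib^4*P1 + 288*X^3*ib^5*P1 + 4*X^3*ib^6*P2 + 288*X^4*ib^5*P1
      + 4*X^4*ib^6*P2 + 24*X^4*ib^7*P2 + 24*X^5*ib^7*P2 + 144*X^5*ib^8*P2
      + 144*X^6*ib^8*P2) * hib


theorem functional_equation_f3 :
    ((1 + 4 * X : PowerSeries ℚ)⁻¹) ^ 2 * psComp f3 (X * ((1 + 4 * X)⁻¹) ^ 3)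
      = ((1 - 2 * X : PowerSeries ℚ)⁻¹) ^ 2 * psComp f3 (X ^ 2 * ((1 - 2 * X)⁻¹) ^ 3) := by
  have hca : constantCoeff (R := ℚ) (1 + 4*X : PowerSeries ℚ) ≠ 0 := by simp
  have hcb : constantCoeff (R := ℚ) (1 - 2*X : PowerSeries ℚ) ≠ 0 := by simp
  have hia : (1 + 4*X : PowerSeries ℚ) * (1 + 4*X : PowerSeries ℚ)⁻¹ = 1 :=
    PowerSeries.mul_inv_cancel _ hca
  have hib : (1 - 2*X : PowerSeries ℚ) * (1 - 2*X : PowerSeries ℚ)⁻¹ = 1 :=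
    PowerSeries.mul_inv_cancel _ hcb
  have hu : constantCoeff (R := ℚ) (X * ((1 + 4*X : PowerSeries ℚ)⁻¹)^3) = 0 := by
    rw [map_mul, constantCoeff_X, zero_mul]
  have hv : constantCoeff (R := ℚ) (X^2 * ((1 - 2*X : PowerSeries ℚ)⁻¹)^3) = 0 := by
    rw [map_mul, map_pow, constantCoeff_X]
    ring
  have hMF := pullback_F hia (psComp_hh_ODE hu) (psComp_derivative hu hh)
      (psComp_derivative hu (d⁄dX ℚ hh))
  have hMG := pullback_G hib (psComp_hh_ODE hv) (psComp_derivative hv hh)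
      (psComp_derivative hv (d⁄dX ℚ hh))
  set F : PowerSeries ℚ :=
    (1 + 4*X : PowerSeries ℚ)⁻¹ * psComp hh (X * ((1 + 4*X : PowerSeries ℚ)⁻¹)^3) with hF_def
  set G : PowerSeries ℚ :=
    (1 - 2*X : PowerSeries ℚ)⁻¹ * psComp hh (X^2 * ((1 - 2*X : PowerSeries ℚ)⁻¹)^3) with hG_def
  have hW : X*(1+X)*(1-8*X) * d⁄dX ℚ (d⁄dX ℚ (F - G)) + (1-14*X-24*X^2) * d⁄dX ℚ (F - G)
      - 2*(1+4*X) * (F - G) = 0 := by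
    simp only [map_sub]
    linear_combination hMF - hMG
  have hcomp0 : ∀ w : PowerSeries ℚ, constantCoeff (R := ℚ) (psComp hh w) = 1 := by
    intro w
    have h1 : coeff (R := ℚ) 0 (psComp hh w) = 1 := by
      rw [psComp, coeff_mk, Finset.sum_range_one, pow_zero]
      simp [hh, tt]
    rwa [coeff_zero_eq_constantCoeff] at h1
  have hcia : constantCoeff (R := ℚ) ((1 + 4*X : PowerSeries ℚ)⁻¹) = 1 := by
    have h1 := congrArg (constantCoeff (R := ℚ)) hia
    rw [map_mul, map_one] at h1
    have h2 : constantCoeff (R := ℚ) (1 + 4*X : PowerSeries ℚ) = 1 := by simp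
    rw [h2, one_mul] at h1
    exact h1
  have hcib : constantCoeff (R := ℚ) ((1 - 2*X : PowerSeries ℚ)⁻¹) = 1 := by
    have h1 := congrArg (constantCoeff (R := ℚ)) hib
    rw [map_mul, map_one] at h1
    have h2 : constantCoeff (R := ℚ) (1 - 2*X : PowerSeries ℚ) = 1 := by simp
    rw [h2, one_mul] at h1
    exact h1
  have h0 : coeff (R := ℚ) 0 (F - G) = 0 := by
    rw [coeff_zero_eq_constantCoeff, map_sub, hF_def, hG_def, map_mul, map_mul, hcia, hcib,
      hcomp0, hcomp0]
    ring
  have hFG : F = G := sub_eq_zero.mp (ode_unique hW h0)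
  have hf3 : f3 = hh * hh := by rw [f3, hh, sq]; rfl
  calc ((1 + 4 * X : PowerSeries ℚ)⁻¹) ^ 2 * psComp f3 (X * ((1 + 4 * X)⁻¹) ^ 3)
      = F^2 := by rw [hf3, psComp_mul hu, hF_def]; ring
    _ = G^2 := by rw [hFG]
    _ = ((1 - 2 * X : PowerSeries ℚ)⁻¹) ^ 2 * psComp f3 (X ^ 2 * ((1 - 2 * X)⁻¹) ^ 3) := by
        rw [hf3, psComp_mul hv, hG_def]; ring
end

section
/- The formal power series F(x) = ∑_{n≥0} C(2n,n)^3 x^n satisfies, as an identity of formal power series in z, (1+8z)^{-1} · F(z·((1−z)/(1+8z))^3) = F(z^3·(1−z)/(1+8z)). -/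
open PowerSeries

noncomputable def f4hat : PowerSeries ℚ :=
  PowerSeries.mk fun n => ((2 * n).choose n : ℚ) ^ 3

namespace FE4

local notation "D" => d⁄dX ℚ

noncomputable def PS (h g : ℚ⟦X⟧) (m : ℕ) : ℚ⟦X⟧ :=
  ∑ k ∈ Finset.range (m+1), C (coeff k h) * g^k

lemma coeff_pow_of_lt {g : ℚ⟦X⟧} (hg : constantCoeff g = 0) {n k : ℕ} (h : n < k) :
    coeff n (g ^ k) = 0 := by
  obtain ⟨t, rfl⟩ := X_dvd_iff.mpr hg
  rw [mul_pow, coeff_X_pow_mul', if_neg (by omega)]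

lemma coeff_psComp {g : ℚ⟦X⟧} (hg : constantCoeff g = 0) (h : ℚ⟦X⟧) {n m : ℕ} (hnm : n ≤ m) :
    coeff n (psComp h g) = coeff n (PS h g m) := by
  rw [psComp, coeff_mk, PS, map_sum]
  simp only [coeff_C_mul]
  exact Finset.sum_subset (Finset.range_subset_range.mpr (by omega))
    (fun k hk hk' => by
      have hn : n < k := by
        simp only [Finset.mem_range] at hk hk'; omega
      rw [coeff_pow_of_lt hg hn, mul_zero])

lemma psComp_add (a b g : ℚ⟦X⟧) : psComp (a + b) g = psComp a g + psComp b g := by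
  ext n
  simp [psComp, coeff_mk, add_mul, Finset.sum_add_distrib]

lemma psComp_C_mul (c : ℚ) (h g : ℚ⟦X⟧) : psComp (C c * h) g = C c * psComp h g := by
  ext n
  simp [psComp, coeff_C_mul, Finset.mul_sum, mul_assoc]

lemma psComp_sub (a b g : ℚ⟦X⟧) : psComp (a - b) g = psComp a g - psComp b g := by
  ext n
  simp [psComp, coeff_mk, sub_mul, Finset.sum_sub_distrib]

lemma psComp_zero (g : ℚ⟦X⟧) : psComp 0 g = 0 := by
  ext n; simp [psComp]

lemma coeff_zero_psComp (h g : ℚ⟦X⟧) : coeff 0 (psComp h g) = coeff 0 h := by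
  rw [psComp, coeff_mk]
  simp

lemma psComp_X_mul {g : ℚ⟦X⟧} (hg : constantCoeff g = 0) (h : ℚ⟦X⟧) :
    psComp (X * h) g = g * psComp h g := by
  ext n
  rw [psComp, coeff_mk, Finset.sum_range_succ']
  have h0 : coeff 0 (X * h) = 0 := by
    rw [coeff_zero_eq_constantCoeff, map_mul, constantCoeff_X, zero_mul]
  rw [h0, zero_mul, add_zero]
  simp only [coeff_succ_X_mul]
  have hR : coeff n (g * psComp h g) = coeff n (g * PS h g n) := by
    rw [coeff_mul, coeff_mul]
    apply Finset.sum_congr rfl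
    rintro ⟨i, j⟩ hij
    rcases Nat.eq_zero_or_pos i with hi | hi
    · subst hi
      rw [coeff_zero_eq_constantCoeff, hg, zero_mul, zero_mul]
    · have hj : j ≤ n := by
        have := Finset.HasAntidiagonal.mem_antidiagonal.mp hij; omega
      rw [coeff_psComp hg h hj]
  rw [hR, PS, Finset.mul_sum, map_sum]
  have hterm : ∀ k, coeff n (g * (C (coeff k h) * g ^ k))
      = coeff k h * coeff n (g ^ (k+1)) := by
    intro k
    rw [show g * (C (coeff k h) * g ^ k) = C (coeff k h) * g ^ (k+1) by ring,
      coeff_C_mul]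
  simp only [hterm]
  rw [Finset.sum_range_succ, coeff_pow_of_lt hg (by omega), mul_zero, add_zero]

lemma psComp_D {g : ℚ⟦X⟧} (hg : constantCoeff g = 0) (h : ℚ⟦X⟧) :
    D (psComp h g) = psComp (D h) g * D g := by
  ext n
  rw [coeff_derivative, coeff_psComp hg h (le_refl (n+1))]
  have hR : coeff n (psComp (D h) g * D g) = coeff n (PS (D h) g n * D g) := by
    rw [coeff_mul, coeff_mul]
    apply Finset.sum_congr rfl
    rintro ⟨i, j⟩ hij
    have hi : i ≤ n := by
      have := Finset.HasAntidiagonal.mem_antidiagonal.mp hij; omega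
    rw [coeff_psComp hg (D h) hi]
  rw [hR]
  have key : D (PS h g (n+1)) = PS (D h) g n * D g := by
    rw [PS, map_sum, Finset.sum_range_succ']
    have hz : D (C (coeff 0 h) * g ^ 0) = 0 := by
      simp
    rw [hz, add_zero, PS, Finset.sum_mul]
    apply Finset.sum_congr rfl
    intro k hk
    rw [Derivation.leibniz, Derivation.leibniz_pow, derivative_C, coeff_derivative, map_mul]
    have : (C (R := ℚ)) ((k:ℚ) + 1) = ((k:ℕ) + 1 : ℚ⟦X⟧) := by
      push_cast
      simp [map_add, map_natCast]
    simp only [smul_eq_mul, nsmul_eq_mul, smul_zero, mul_zero, add_zero, Nat.add_sub_cancel]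
    push_cast
    rw [this]
    ring
  have := congrArg (coeff n) key
  rw [coeff_derivative] at this
  exact this

set_option maxHeartbeats 4000000
set_option maxRecDepth 100000

noncomputable def ss : ℚ⟦X⟧ := (1 + 8*X)⁻¹
noncomputable def uu : ℚ⟦X⟧ := X * ((1 - X) * ss) ^ 3
noncomputable def vv : ℚ⟦X⟧ := X ^ 3 * (1 - X) * ss
noncomputable def F0 : ℚ⟦X⟧ := f4hat
noncomputable def F1 : ℚ⟦X⟧ := D F0
noncomputable def F2 : ℚ⟦X⟧ := D F1
noncomputable def F3 : ℚ⟦X⟧ := D F2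
noncomputable def G0 : ℚ⟦X⟧ := psComp F0 uu
noncomputable def G1 : ℚ⟦X⟧ := psComp F1 uu
noncomputable def G2 : ℚ⟦X⟧ := psComp F2 uu
noncomputable def G3 : ℚ⟦X⟧ := psComp F3 uu
noncomputable def H0 : ℚ⟦X⟧ := psComp F0 vv
noncomputable def H1 : ℚ⟦X⟧ := psComp F1 vv
noncomputable def H2 : ℚ⟦X⟧ := psComp F2 vv
noncomputable def H3 : ℚ⟦X⟧ := psComp F3 vv

lemma D_ofNat (n : ℕ) [n.AtLeastTwo] : D (OfNat.ofNat n : ℚ⟦X⟧) = 0 := by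
  rw [← Nat.cast_ofNat, Derivation.map_natCast]

lemma hD18 : D (1 + 8*X : ℚ⟦X⟧) = 8 := by
  rw [map_add, Derivation.map_one_eq_zero, Derivation.leibniz, derivative_X, D_ofNat]
  simp

lemma hscancel : (1 + 8*X : ℚ⟦X⟧) * ss = 1 := by
  apply PowerSeries.mul_inv_cancel
  simp

lemma hDss : D ss = -8 * ss^2 := by
  have h := derivative_inv' (1 + 8*X : ℚ⟦X⟧)
  rw [hD18] at h
  calc D ss = -((1 + 8*X : ℚ⟦X⟧)⁻¹)^2 * 8 := h
  _ = -8 * ss^2 := by rw [show (1 + 8*X : ℚ⟦X⟧)⁻¹ = ss from rfl]; ring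

lemma huu0 : constantCoeff uu = 0 := by
  rw [uu, map_mul, constantCoeff_X, zero_mul]

lemma hvv0 : constantCoeff vv = 0 := by
  rw [vv, map_mul, map_mul, map_pow, constantCoeff_X]
  ring

lemma hcF0 (n : ℕ) : coeff n F0 = ((2*n).choose n : ℚ)^3 := by
  rw [show F0 = f4hat from rfl, f4hat, coeff_mk]

lemma hrec (n : ℕ) : ((n:ℚ)+1)^3 * coeff (n+1) F0 = 8*(2*(n:ℚ)+1)^3 * coeff n F0 := by
  have h := Nat.succ_mul_centralBinom_succ n
  have h3 := congrArg (fun t : ℕ => ((t : ℚ))^3) h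
  simp only [Nat.centralBinom] at h3
  push_cast at h3
  rw [hcF0, hcF0]
  rw [show 2*(n+1) = 2*n+2 from rfl]
  rw [show 2*(n+1) = 2*n+2 from rfl] at h3
  linear_combination h3

lemma cX0 (t : ℚ⟦X⟧) : coeff 0 (X * t) = 0 := by
  rw [coeff_zero_eq_constantCoeff, map_mul, constantCoeff_X, zero_mul]

lemma uudef : uu = X * ((1 - X) * ss) ^ 3 := rfl
lemma vvdef : vv = X ^ 3 * (1 - X) * ss := rfl

lemma hLF : X*(X*F3) - C 64 * (X*(X*(X*F3))) + C 3 * (X*F2) - C 288 * (X*(X*F2)) + F1 - C 208 * (X*F1) - C 8 * F0 = 0 := by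
  ext n
  simp only [map_add, map_sub, coeff_C_mul, map_zero]
  rcases n with _ | n
  · simp only [cX0, show F1 = D F0 from rfl, coeff_derivative, hcF0]
    norm_num
  rcases n with _ | n
  · simp only [coeff_succ_X_mul, cX0, show F3 = D F2 from rfl, show F2 = D F1 from rfl,
      show F1 = D F0 from rfl, coeff_derivative, hcF0,
      show Nat.choose 4 2 = 6 from by decide, show Nat.choose 2 1 = 2 from by decide]
    norm_num
  rcases n with _ | n
  · simp only [coeff_succ_X_mul, cX0, show F3 = D F2 from rfl, show F2 = D F1 from rfl,
      show F1 = D F0 from rfl, coeff_derivative, hcF0,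
      show Nat.choose 6 3 = 20 from by decide, show Nat.choose 4 2 = 6 from by decide,
      show Nat.choose 2 1 = 2 from by decide]
    norm_num
  · simp only [coeff_succ_X_mul, show F3 = D F2 from rfl, show F2 = D F1 from rfl,
      show F1 = D F0 from rfl, coeff_derivative]
    have hr := hrec (n+1+1+1)
    push_cast at hr ⊢
    linear_combination hr

lemma hbrau : uu*(uu*G3) - 64 * (uu*(uu*(uu*G3))) + 3 * (uu*G2) - 288 * (uu*(uu*G2)) + G1 - 208 * (uu*G1) - 8 * G0 = 0 := by
  have h1 : psComp (X*(X*F3) - C 64 * (X*(X*(X*F3))) + C 3 * (X*F2) - C 288 * (X*(X*F2)) + F1 - C 208 * (X*F1) - C 8 * F0) uu = 0 := by rw [hLF, psComp_zero]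
  simp only [psComp_add, psComp_sub, psComp_C_mul, psComp_X_mul huu0] at h1
  rw [show psComp F3 uu = G3 from rfl, show psComp F2 uu = G2 from rfl,
     show psComp F1 uu = G1 from rfl, show psComp F0 uu = G0 from rfl] at h1
  simp only [map_ofNat] at h1
  linear_combination h1

lemma hbrav : vv*(vv*H3) - 64 * (vv*(vv*(vv*H3))) + 3 * (vv*H2) - 288 * (vv*(vv*H2)) + H1 - 208 * (vv*H1) - 8 * H0 = 0 := by
  have h1 : psComp (X*(X*F3) - C 64 * (X*(X*(X*F3))) + C 3 * (X*F2) - C 288 * (X*(X*F2)) + F1 - C 208 * (X*F1) - C 8 * F0) vv = 0 := by rw [hLF, psComp_zero]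
  simp only [psComp_add, psComp_sub, psComp_C_mul, psComp_X_mul hvv0] at h1
  rw [show psComp F3 vv = H3 from rfl, show psComp F2 vv = H2 from rfl,
     show psComp F1 vv = H1 from rfl, show psComp F0 vv = H0 from rfl] at h1
  simp only [map_ofNat] at h1
  linear_combination h1

lemma hDuu : D uu = ss^3 - 6*X*ss^3 - 24*X*ss^4 + 9*X^2*ss^3 + 72*X^2*ss^4 - 4*X^3*ss^3 - 72*X^3*ss^4 + 24*X^4*ss^4 := by
  rw [show uu = X * ((1 - X) * ss) ^ 3 from rfl]
  simp only [Derivation.leibniz, Derivation.leibniz_pow, derivative_X, map_sub,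
    Derivation.map_one_eq_zero, smul_eq_mul, hDss, nsmul_eq_mul, Nat.cast_ofNat, Nat.reduceSub]
  ring

lemma hDvv : D vv = 3*X^2*ss - 4*X^3*ss - 8*X^3*ss^2 + 8*X^4*ss^2 := by
  rw [show vv = X ^ 3 * (1 - X) * ss from rfl]
  simp only [Derivation.leibniz, Derivation.leibniz_pow, derivative_X, map_sub,
    Derivation.map_one_eq_zero, smul_eq_mul, hDss, nsmul_eq_mul, Nat.cast_ofNat, Nat.reduceSub]
  ring

lemma hDG0 : D G0 = G1 * D uu := by
  rw [show G0 = psComp F0 uu from rfl, psComp_D huu0 F0,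
     show D F0 = F1 from rfl, show psComp F1 uu = G1 from rfl]

lemma hDG1 : D G1 = G2 * D uu := by
  rw [show G1 = psComp F1 uu from rfl, psComp_D huu0 F1,
     show D F1 = F2 from rfl, show psComp F2 uu = G2 from rfl]

lemma hDG2 : D G2 = G3 * D uu := by
  rw [show G2 = psComp F2 uu from rfl, psComp_D huu0 F2,
     show D F2 = F3 from rfl, show psComp F3 uu = G3 from rfl]

lemma hDH0 : D H0 = H1 * D vv := by
  rw [show H0 = psComp F0 vv from rfl, psComp_D hvv0 F0,
     show D F0 = F1 from rfl, show psComp F1 vv = H1 from rfl]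

lemma hDH1 : D H1 = H2 * D vv := by
  rw [show H1 = psComp F1 vv from rfl, psComp_D hvv0 F1,
     show D F1 = F2 from rfl, show psComp F2 vv = H2 from rfl]

lemma hDH2 : D H2 = H3 * D vv := by
  rw [show H2 = psComp F2 vv from rfl, psComp_D hvv0 F2,
     show D F2 = F3 from rfl, show psComp F3 vv = H3 from rfl]

lemma huA1 : D (ss * G0) = - 8*ss^2*G0 + ss^4*G1 - 6*X*ss^4*G1 - 24*X*ss^5*G1 + 9*X^2*ss^4*G1 + 72*X^2*ss^5*G1 - 4*X^3*ss^4*G1 - 72*X^3*ss^5*G1 + 24*X^4*ss^5*G1 := by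
  simp only [Derivation.leibniz, Derivation.leibniz_pow, derivative_X, map_add, map_sub,
    map_neg, Derivation.map_one_eq_zero, smul_eq_mul, nsmul_eq_mul, Nat.cast_ofNat,
    Nat.reduceSub, hDss, hDG0, hDG1, hDG2, hDuu]
  ring

lemma huA2 : D (- 8*ss^2*G0 + ss^4*G1 - 6*X*ss^4*G1 - 24*X*ss^5*G1 + 9*X^2*ss^4*G1 + 72*X^2*ss^5*G1 - 4*X^3*ss^4*G1 - 72*X^3*ss^5*G1 + 24*X^4*ss^5*G1) = 128*ss^3*G0 - 6*ss^4*G1 - 64*ss^5*G1 + ss^7*G2 + 18*X*ss^4*G1 + 384*X*ss^5*G1 + 1152*X*ss^6*G1 - 12*X*ss^7*G2 - 48*X*ss^8*G2 - 12*X^2*ss^4*G1 - 576*X^2*ss^5*G1 - 3456*X^2*ss^6*G1 + 54*X^2*ss^7*G2 + 432*X^2*ss^8*G2 + 576*X^2*ss^9*G2 + 256*X^3*ss^5*G1 + 3456*X^3*ss^6*G1 - 116*X^3*ss^7*G2 - 1440*X^3*ss^8*G2 - 3456*X^3*ss^9*G2 - 1152*X^4*ss^6*G1 + 129*X^4*ss^7*G2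 + 2400*X^4*ss^8*G2 + 8640*X^4*ss^9*G2 - 72*X^5*ss^7*G2 - 2160*X^5*ss^8*G2 - 11520*X^5*ss^9*G2 + 16*X^6*ss^7*G2 + 1008*X^6*ss^8*G2 + 8640*X^6*ss^9*G2 - 192*X^7*ss^8*G2 - 3456*X^7*ss^9*G2 + 576*X^8*ss^9*G2 := by
  simp only [Derivation.leibniz, Derivation.leibniz_pow, derivative_X, map_add, map_sub,
    map_neg, Derivation.map_one_eq_zero, smul_eq_mul, nsmul_eq_mul, Nat.cast_ofNat,
    Nat.reduceSub, hDss, hDG0, hDG1, hDG2, hDuu,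
    show D (4:ℚ⟦X⟧) = 0 from D_ofNat 4, show D (6:ℚ⟦X⟧) = 0 from D_ofNat 6, show D (8:ℚ⟦X⟧) = 0 from D_ofNat 8, show D (9:ℚ⟦X⟧) = 0 from D_ofNat 9, show D (24:ℚ⟦X⟧) = 0 from D_ofNat 24, show D (72:ℚ⟦X⟧) = 0 from D_ofNat 72]
  ring

lemma huA3 : D (128*ss^3*G0 - 6*ss^4*G1 - 64*ss^5*G1 + ss^7*G2 + 18*X*ss^4*G1 + 384*X*ss^5*G1 + 1152*X*ss^6*G1 - 12*X*ss^7*G2 - 48*X*ss^8*G2 - 12*X^2*ss^4*G1 - 576*X^2*ss^5*G1 - 3456*X^2*ss^6*G1 + 54*X^2*ss^7*G2 + 432*X^2*ss^8*G2 + 576*X^2*ss^9*G2 + 256*X^3*ss^5*G1 + 3456*X^3*ss^6*G1 - 116*X^3*ss^7*G2 - 1440*X^3*ss^8*G2 - 3456*X^3*ss^9*G2 - 1152*X^4*ss^6*G1 + 129*X^4*ss^7*G2 + 2400*X^4*ss^8*G2 + 8640*X^4*ss^9*G2 - 72*X^5*ss^7*G2 - 2160*X^5*ss^8*G2 - 11520*X^5*ss^9*G2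 + 16*X^6*ss^7*G2 + 1008*X^6*ss^8*G2 + 8640*X^6*ss^9*G2 - 192*X^7*ss^8*G2 - 3456*X^7*ss^9*G2 + 576*X^8*ss^9*G2) = 18*ss^4*G1 - 3072*ss^4*G0 + 576*ss^5*G1 + 3840*ss^6*G1 - 18*ss^7*G2 - 168*ss^8*G2 + ss^10*G3 - 24*X*ss^4*G1 - 1728*X*ss^5*G1 - 23040*X*ss^6*G1 + 162*X*ss^7*G2 - 58368*X*ss^7*G1 + 2448*X*ss^8*G2 + 6912*X*ss^9*G2 - 18*X*ss^10*G3 - 72*X*ss^11*G3 + 1152*X^2*ss^5*G1 + 34560*X^2*ss^6*G1 - 522*X^2*ss^7*G2 + 175104*X^2*ss^7*G1 - 11664*X^2*ss^8*G2 - 62208*X^2*ss^9*G2 + 135*X^2*ss^10*G3 - 69120*X^2*ss^10*G2 + 1080*X^2*ss^11*G3 + 1728*X^2*ss^12*G3 - 15360*X^3*ss^6*G1 + 774*X^3*ss^7*G2 - 175104*X^3*ss^7*G1 + 25536*X^3*ss^8*G2 + 207360*X^3*ss^9*G2 - 552*X^3*ss^10*G3 + 414720*X^3*ss^10*G2 -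 6696*X^3*ss^11*G3 - 20736*X^3*ss^12*G3 - 13824*X^3*ss^13*G3 - 540*X^4*ss^7*G2 + 58368*X^4*ss^7*G1 - 28584*X^4*ss^8*G2 - 345600*X^4*ss^9*G2 + 1359*X^4*ss^10*G3 - 1036800*X^4*ss^10*G2 + 22680*X^4*ss^11*G3 + 103680*X^4*ss^12*G3 + 124416*X^4*ss^13*G3 + 144*X^5*ss^7*G2 + 15984*X^5*ss^8*G2 + 311040*X^5*ss^9*G2 - 2106*X^5*ss^10*G3 + 1382400*X^5*ss^10*G2 - 46872*X^5*ss^11*G3 - 290304*X^5*ss^12*G3 - 497664*X^5*ss^13*G3 - 3552*X^6*ss^8*G2 - 145152*X^6*ss^9*G2 + 2073*X^6*ss^10*G3 - 1036800*X^6*ss^10*G2 + 61992*X^6*ss^11*G3 + 508032*X^6*ss^12*G3 + 1161216*X^6*ss^13*G3 + 27648*X^7*ss^9*G2 - 1260*X^7*ss^10*G3 + 414720*X^7*ss^10*G2 - 52920*X^7*ss^11*G3 - 580608*X^7*ss^12*G3 - 1741824*X^7*ss^13*G3 + 432*X^8*ss^10*G3 - 69120*X^8*ss^10*G2 + 28296*X^8*ss^11*G3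 + 435456*X^8*ss^12*G3 + 1741824*X^8*ss^13*G3 - 64*X^9*ss^10*G3 - 8640*X^9*ss^11*G3 - 207360*X^9*ss^12*G3 - 1161216*X^9*ss^13*G3 + 1152*X^10*ss^11*G3 + 57024*X^10*ss^12*G3 + 497664*X^10*ss^13*G3 - 6912*X^11*ss^12*G3 - 124416*X^11*ss^13*G3 + 13824*X^12*ss^13*G3 := by
  simp only [Derivation.leibniz, Derivation.leibniz_pow, derivative_X, map_add, map_sub,
    map_neg, Derivation.map_one_eq_zero, smul_eq_mul, nsmul_eq_mul, Nat.cast_ofNat,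
    Nat.reduceSub, hDss, hDG0, hDG1, hDG2, hDuu,
    show D (6:ℚ⟦X⟧) = 0 from D_ofNat 6, show D (12:ℚ⟦X⟧) = 0 from D_ofNat 12, show D (16:ℚ⟦X⟧) = 0 from D_ofNat 16, show D (18:ℚ⟦X⟧) = 0 from D_ofNat 18, show D (48:ℚ⟦X⟧) = 0 from D_ofNat 48, show D (54:ℚ⟦X⟧) = 0 from D_ofNat 54, show D (64:ℚ⟦X⟧) = 0 from D_ofNat 64, show D (72:ℚ⟦X⟧) = 0 from D_ofNat 72, show D (116:ℚ⟦X⟧) = 0 from D_ofNat 116, show D (128:ℚ⟦X⟧) = 0 from D_ofNat 128, show D (129:ℚ⟦X⟧) = 0 from D_ofNat 129, show D (192:ℚ⟦X⟧) = 0 from D_ofNat 192, show D (256:ℚ⟦X⟧) = 0 from D_ofNat 256, show D (384:ℚ⟦X⟧) = 0 from D_ofNat 384, show D (432:ℚ⟦X⟧) = 0 from D_ofNat 432, show D (576:ℚ⟦X⟧) = 0 from D_ofNat 576, show D (1008:ℚ⟦X⟧) = 0 from D_ofNat 1008, show D (1152:ℚ⟦X⟧) = 0 from D_ofNat 1152,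 show D (1440:ℚ⟦X⟧) = 0 from D_ofNat 1440, show D (2160:ℚ⟦X⟧) = 0 from D_ofNat 2160, show D (2400:ℚ⟦X⟧) = 0 from D_ofNat 2400, show D (3456:ℚ⟦X⟧) = 0 from D_ofNat 3456, show D (8640:ℚ⟦X⟧) = 0 from D_ofNat 8640, show D (11520:ℚ⟦X⟧) = 0 from D_ofNat 11520]
  ring

lemma hvA1 : D (H0) = 3*X^2*ss*H1 - 4*X^3*ss*H1 - 8*X^3*ss^2*H1 + 8*X^4*ss^2*H1 := by
  simp only [Derivation.leibniz, Derivation.leibniz_pow, derivative_X, map_add, map_sub,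
    map_neg, Derivation.map_one_eq_zero, smul_eq_mul, nsmul_eq_mul, Nat.cast_ofNat,
    Nat.reduceSub, hDss, hDH0, hDH1, hDH2, hDvv]
  ring

lemma hvA2 : D (3*X^2*ss*H1 - 4*X^3*ss*H1 - 8*X^3*ss^2*H1 + 8*X^4*ss^2*H1) = 6*X*ss*H1 - 12*X^2*ss*H1 - 48*X^2*ss^2*H1 + 64*X^3*ss^2*H1 + 128*X^3*ss^3*H1 + 9*X^4*ss^2*H2 - 128*X^4*ss^3*H1 - 24*X^5*ss^2*H2 - 48*X^5*ss^3*H2 + 16*X^6*ss^2*H2 + 112*X^6*ss^3*H2 + 64*X^6*ss^4*H2 - 64*X^7*ss^3*H2 - 128*X^7*ss^4*H2 + 64*X^8*ss^4*H2 := by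
  simp only [Derivation.leibniz, Derivation.leibniz_pow, derivative_X, map_add, map_sub,
    map_neg, Derivation.map_one_eq_zero, smul_eq_mul, nsmul_eq_mul, Nat.cast_ofNat,
    Nat.reduceSub, hDss, hDH0, hDH1, hDH2, hDvv,
    show D (3:ℚ⟦X⟧) = 0 from D_ofNat 3, show D (4:ℚ⟦X⟧) = 0 from D_ofNat 4, show D (8:ℚ⟦X⟧) = 0 from D_ofNat 8]
  ring

lemma hvA3 : D (6*X*ss*H1 - 12*X^2*ss*H1 - 48*X^2*ss^2*H1 + 64*X^3*ss^2*H1 + 128*X^3*ss^3*H1 + 9*X^4*ss^2*H2 - 128*X^4*ss^3*H1 - 24*X^5*ss^2*H2 - 48*X^5*ss^3*H2 + 16*X^6*ss^2*H2 + 112*X^6*ss^3*H2 + 64*X^6*ss^4*H2 - 64*X^7*ss^3*H2 - 128*X^7*ss^4*H2 + 64*X^8*ss^4*H2) = 6*ss*H1 - 24*X*ss*H1 - 144*X*ss^2*H1 + 288*X^2*ss^2*H1 + 1152*X^2*ss^3*H1 + 54*X^3*ss^2*H2 - 1536*X^3*ss^3*H1 - 3072*X^3*ss^4*H1 - 180*X^4*ss^2*H2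 - 576*X^4*ss^3*H2 + 3072*X^4*ss^4*H1 + 144*X^5*ss^2*H2 + 1584*X^5*ss^3*H2 + 2304*X^5*ss^4*H2 + 27*X^6*ss^3*H3 - 1056*X^6*ss^3*H2 - 5376*X^6*ss^4*H2 - 3072*X^6*ss^5*H2 - 108*X^7*ss^3*H3 - 216*X^7*ss^4*H3 + 3072*X^7*ss^4*H2 + 6144*X^7*ss^5*H2 + 144*X^8*ss^3*H3 + 792*X^8*ss^4*H3 + 576*X^8*ss^5*H3 - 3072*X^8*ss^5*H2 - 64*X^9*ss^3*H3 - 960*X^9*ss^4*H3 - 1920*X^9*ss^5*H3 - 512*X^9*ss^6*H3 + 384*X^10*ss^4*H3 + 2112*X^10*ss^5*H3 + 1536*X^10*ss^6*H3 - 768*X^11*ss^5*H3 - 1536*X^11*ss^6*H3 + 512*X^12*ss^6*H3 := by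
  simp only [Derivation.leibniz, Derivation.leibniz_pow, derivative_X, map_add, map_sub,
    map_neg, Derivation.map_one_eq_zero, smul_eq_mul, nsmul_eq_mul, Nat.cast_ofNat,
    Nat.reduceSub, hDss, hDH0, hDH1, hDH2, hDvv,
    show D (6:ℚ⟦X⟧) = 0 from D_ofNat 6, show D (9:ℚ⟦X⟧) = 0 from D_ofNat 9, show D (12:ℚ⟦X⟧) = 0 from D_ofNat 12, show D (16:ℚ⟦X⟧) = 0 from D_ofNat 16, show D (24:ℚ⟦X⟧) = 0 from D_ofNat 24, show D (48:ℚ⟦X⟧) = 0 from D_ofNat 48, show D (64:ℚ⟦X⟧) = 0 from D_ofNat 64, show D (112:ℚ⟦X⟧) = 0 from D_ofNat 112, show D (128:ℚ⟦X⟧) = 0 from D_ofNat 128]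
  ring

lemma hMu : (- 216*X^2 - 864*X^3 + 1728*X^4) * (ss * G0) + (1 + 34*X + 262*X^2 - 352*X^3 - 5488*X^4 + 6272*X^5) * (D (ss * G0)) + (3*X + 75*X^2 + 534*X^3 + 348*X^4 - 4800*X^5 + 3840*X^6) * (D (D (ss * G0))) + (X^2 + 22*X^3 + 145*X^4 + 152*X^5 - 832*X^6 + 512*X^7) * (D (D (D (ss * G0)))) = 0 := by
  have e1 := huA1
  have e2 := huA2
  rw [← e1] at e2
  have e3 := huA3
  rw [← e2] at e3
  rw [e3, e2, e1]
  linear_combination (ss - 22*X*ss + 33*X^2*ss - 4*X^3*ss - 8*X^4*ss) * hbrau + (- 3*ss*G2 + 208*ss*G1 - ss*uu*G3 + 288*ss*uu*G2 + 64*ss*uu^2*G3 + 66*X*ss*G2 - 4576*X*ss*G1 + 22*X*ss*uu*G3 - 6336*X*ss*uu*G2 - 1408*X*ss*uu^2*G3 - X*ss^4*G3 + 288*X*ss^4*G2 + 64*X*ss^4*uu*G3 - 99*X^2*ss*G2 + 6864*X^2*ss*G1 - 33*X^2*ss*uu*G3 + 9504*X^2*ss*uu*G2 + 2112*X^2*ss*uu^2*G3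 + 25*X^2*ss^4*G3 - 7200*X^2*ss^4*G2 - 1600*X^2*ss^4*uu*G3 + 64*X^2*ss^7*G3 + 12*X^3*ss*G2 - 832*X^3*ss*G1 + 4*X^3*ss*uu*G3 - 1152*X^3*ss*uu*G2 - 256*X^3*ss*uu^2*G3 - 102*X^3*ss^4*G3 + 29376*X^3*ss^4*G2 + 6528*X^3*ss^4*uu*G3 - 1792*X^3*ss^7*G3 + 24*X^4*ss*G2 - 1664*X^4*ss*G1 + 8*X^4*ss*uu*G3 - 2304*X^4*ss*uu*G2 - 512*X^4*ss*uu^2*G3 + 170*X^4*ss^4*G3 - 48960*X^4*ss^4*G2 - 10880*X^4*ss^4*uu*G3 + 11520*X^4*ss^7*G3 - 125*X^5*ss^4*G3 + 36000*X^5*ss^4*G2 + 8000*X^5*ss^4*uu*G3 - 35328*X^5*ss^7*G3 + 21*X^6*ss^4*G3 - 6048*X^6*ss^4*G2 - 1344*X^6*ss^4*uu*G3 + 61824*X^6*ss^7*G3 + 20*X^7*ss^4*G3 - 5760*X^7*ss^4*G2 - 1280*X^7*ss^4*uu*G3 - 64512*X^7*ss^7*G3 - 8*X^8*ss^4*G3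 + 2304*X^8*ss^4*G2 + 512*X^8*ss^4*uu*G3 + 37632*X^8*ss^7*G3 - 7680*X^9*ss^7*G3 - 4032*X^10*ss^7*G3 + 2816*X^11*ss^7*G3 - 512*X^12*ss^7*G3) * (uudef) + (ss*G1 - 8*ss*G0 + ss^2*G1 + ss^3*G1 - 22*X*ss*G1 + 176*X*ss*G0 - 14*X*ss^2*G1 + 384*X*ss^2*G0 - 6*X*ss^3*G1 + 3*X*ss^4*G2 - 216*X*ss^4*G1 + 3*X*ss^5*G2 + 3*X*ss^6*G2 + 33*X^2*ss*G1 - 48*X^2*ss*G0 - 143*X^2*ss^2*G1 + 3456*X^2*ss^2*G0 - 255*X^2*ss^3*G1 - 3072*X^2*ss^3*G0 - 75*X^2*ss^4*G2 + 5208*X^2*ss^4*G1 - 51*X^2*ss^5*G2 + 7296*X^2*ss^5*G1 - 27*X^2*ss^6*G2 + X^2*ss^7*G3 - 312*X^2*ss^7*G2 + X^2*ss^8*G3 + X^2*ss^9*G3 - 4*X^3*ss*G1 + 896*X^3*ss*G0 + 260*X^3*ss^2*G1 - 2304*X^3*ss^2*G0 - 884*X^3*ss^3*G1 - 43008*X^3*ss^3*G0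 + 306*X^3*ss^4*G2 - 21000*X^3*ss^4*G1 - 294*X^3*ss^5*G2 + 20736*X^3*ss^5*G1 - 702*X^3*ss^6*G2 - 58368*X^3*ss^6*G1 - 28*X^3*ss^7*G3 + 7584*X^3*ss^7*G2 - 20*X^3*ss^8*G3 + 8640*X^3*ss^8*G2 - 12*X^3*ss^9*G3 - 72*X^3*ss^10*G3 - 8*X^4*ss*G1 - 1664*X^4*ss*G0 - 40*X^4*ss^2*G1 - 38400*X^4*ss^2*G0 + 2040*X^4*ss^3*G1 - 101376*X^4*ss^3*G0 - 510*X^4*ss^4*G2 + 22776*X^4*ss^4*G1 + 1938*X^4*ss^5*G2 - 357120*X^4*ss^5*G1 - 414*X^4*ss^6*G2 - 642048*X^4*ss^6*G1 + 180*X^4*ss^7*G3 - 55944*X^4*ss^7*G2 - 44*X^4*ss^8*G3 - 15552*X^4*ss^8*G2 - 204*X^4*ss^9*G3 - 69120*X^4*ss^9*G2 + 1800*X^4*ss^10*G3 + 1728*X^4*ss^11*G3 - 64*X^5*ss^2*G1 + 36864*X^5*ss^2*G0 - 384*X^5*ss^3*G1 + 344064*X^5*ss^3*G0 + 375*X^5*ss^4*G2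 - 72960*X^5*ss^4*G1 - 3705*X^5*ss^5*G2 + 6144*X^5*ss^5*G1 + 11799*X^5*ss^6*G2 + 350208*X^5*ss^6*G1 - 552*X^5*ss^7*G3 + 145872*X^5*ss^7*G2 + 888*X^5*ss^8*G3 - 513216*X^5*ss^8*G2 + 536*X^5*ss^9*G3 - 552960*X^5*ss^9*G2 - 18144*X^5*ss^10*G3 - 10368*X^5*ss^11*G3 - 13824*X^5*ss^12*G3 - 512*X^6*ss^3*G1 - 196608*X^6*ss^3*G0 - 63*X^6*ss^4*G2 + 218640*X^6*ss^4*G1 + 2937*X^6*ss^5*G2 + 2876544*X^6*ss^5*G1 - 26703*X^6*ss^6*G2 + 9922560*X^6*ss^6*G1 + 966*X^6*ss^7*G3 - 218664*X^6*ss^7*G2 - 3450*X^6*ss^8*G3 + 1809216*X^6*ss^8*G2 + 3654*X^6*ss^9*G3 + 2488320*X^6*ss^9*G2 + 78048*X^6*ss^10*G3 - 88128*X^6*ss^11*G3 - 69120*X^6*ss^12*G3 - 60*X^7*ss^4*G2 - 234240*X^7*ss^4*G1 - 564*X^7*ss^5*G2 - 5559552*X^7*ss^5*G1 + 22932*X^7*ss^6*G2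 - 28308480*X^7*ss^6*G1 - 1008*X^7*ss^7*G3 + 504576*X^7*ss^7*G2 + 6720*X^7*ss^8*G3 + 1197504*X^7*ss^8*G2 - 20880*X^7*ss^9*G3 + 8294400*X^7*ss^9*G2 - 179568*X^7*ss^10*G3 + 739584*X^7*ss^11*G3 + 787968*X^7*ss^12*G3 + 24*X^8*ss^4*G2 + 81792*X^8*ss^4*G1 - 456*X^8*ss^5*G2 + 4075008*X^8*ss^5*G1 - 4968*X^8*ss^6*G2 + 32744448*X^8*ss^6*G1 + 588*X^8*ss^7*G3 - 1322424*X^8*ss^7*G2 - 7476*X^8*ss^8*G3 - 16656192*X^8*ss^8*G2 + 46284*X^8*ss^9*G3 - 66769920*X^8*ss^9*G2 + 299376*X^8*ss^10*G3 - 1503360*X^8*ss^11*G3 - 152064*X^8*ss^12*G3 + 192*X^9*ss^5*G2 - 1069056*X^9*ss^5*G1 - 3456*X^9*ss^6*G2 - 17743872*X^9*ss^6*G1 - 120*X^9*ss^7*G3 + 2044944*X^9*ss^7*G2 + 4584*X^9*ss^8*G3 + 38066112*X^9*ss^8*G2 - 55224*X^9*ss^9*G3 + 174182400*X^9*ss^9*G2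 - 610848*X^9*ss^10*G3 - 2301696*X^9*ss^11*G3 - 16727040*X^9*ss^12*G3 + 1536*X^10*ss^6*G2 + 3735552*X^10*ss^6*G1 - 63*X^10*ss^7*G3 - 1721952*X^10*ss^7*G2 - 1023*X^10*ss^8*G3 - 43965504*X^10*ss^8*G2 + 35649*X^10*ss^9*G3 - 249661440*X^10*ss^9*G2 + 1429920*X^10*ss^10*G3 + 18112896*X^10*ss^11*G3 + 79377408*X^10*ss^12*G3 + 44*X^11*ss^7*G3 + 749184*X^11*ss^7*G2 - 460*X^11*ss^8*G3 + 28646784*X^11*ss^8*G2 - 8644*X^11*ss^9*G3 + 217313280*X^11*ss^9*G2 - 2509704*X^11*ss^10*G3 - 44043264*X^11*ss^11*G3 - 196162560*X^11*ss^12*G3 - 8*X^12*ss^7*G3 - 132864*X^12*ss^7*G2 + 344*X^12*ss^8*G3 - 10070784*X^12*ss^8*G2 - 3336*X^12*ss^9*G3 - 115084800*X^12*ss^9*G2 + 2906568*X^12*ss^10*G3 + 62534592*X^12*ss^11*G3 + 311122944*X^12*ss^12*G3 - 64*X^13*ss^8*G3 + 1492992*X^13*ss^8*G2 + 2688*X^13*ss^9*G3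 + 34283520*X^13*ss^9*G2 - 2176704*X^13*ss^10*G3 - 57767040*X^13*ss^11*G3 - 338038272*X^13*ss^12*G3 - 512*X^14*ss^9*G3 - 4423680*X^14*ss^9*G2 + 1021248*X^14*ss^10*G3 + 35391168*X^14*ss^11*G3 + 256227840*X^14*ss^12*G3 - 274176*X^15*ss^10*G3 - 13955328*X^15*ss^11*G3 - 133968384*X^15*ss^12*G3 + 32256*X^16*ss^10*G3 + 3220992*X^16*ss^11*G3 + 46241280*X^16*ss^12*G3 - 331776*X^17*ss^11*G3 - 9510912*X^17*ss^12*G3 + 884736*X^18*ss^12*G3) * hscancel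

lemma hMv : (- 216*X^2 - 864*X^3 + 1728*X^4) * (H0) + (1 + 34*X + 262*X^2 - 352*X^3 - 5488*X^4 + 6272*X^5) * (D (H0)) + (3*X + 75*X^2 + 534*X^3 + 348*X^4 - 4800*X^5 + 3840*X^6) * (D (D (H0))) + (X^2 + 22*X^3 + 145*X^4 + 152*X^5 - 832*X^6 + 512*X^7) * (D (D (D (H0)))) = 0 := by
  have e1 := hvA1
  have e2 := hvA2
  rw [← e1] at e2
  have e3 := hvA3
  rw [← e2] at e3
  rw [e3, e2, e1]
  linear_combination (27*X^2 + 108*X^3 - 216*X^4) * hbrav + (- 81*X^2*H2 + 5616*X^2*H1 - 27*X^2*vv*H3 + 7776*X^2*vv*H2 + 1728*X^2*vv^2*H3 - 324*X^3*H2 + 22464*X^3*H1 - 108*X^3*vv*H3 + 31104*X^3*vv*H2 + 6912*X^3*vv^2*H3 + 648*X^4*H2 - 44928*X^4*H1 + 216*X^4*vv*H3 - 62208*X^4*vv*H2 - 13824*X^4*vv^2*H3 - 27*X^5*ss*H3 + 7776*X^5*ss*H2 + 1728*X^5*ss*vv*H3 - 81*X^6*ss*H3 + 23328*X^6*ss*H2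 + 5184*X^6*ss*vv*H3 + 324*X^7*ss*H3 - 93312*X^7*ss*H2 - 20736*X^7*ss*vv*H3 - 216*X^8*ss*H3 + 62208*X^8*ss*H2 + 13824*X^8*ss*vv*H3 + 1728*X^8*ss^2*H3 + 3456*X^9*ss^2*H3 - 25920*X^10*ss^2*H3 + 34560*X^11*ss^2*H3 - 13824*X^12*ss^2*H3) * (vvdef) + (27*X^2*H1 + 108*X^3*H1 - 296*X^3*ss*H1 - 216*X^4*H1 - 2648*X^4*ss*H1 + 1536*X^4*ss^2*H1 + 81*X^5*ss*H2 + 1648*X^5*ss*H1 + 17664*X^5*ss^2*H1 - 3072*X^5*ss^3*H1 + 243*X^6*ss*H2 + 39824*X^6*ss*H1 - 720*X^6*ss^2*H2 + 10752*X^6*ss^2*H1 - 39936*X^6*ss^3*H1 - 972*X^7*ss*H2 - 77056*X^7*ss*H1 - 6096*X^7*ss^2*H2 - 215808*X^7*ss^2*H1 + 2496*X^7*ss^3*H2 - 58368*X^7*ss^3*H1 + 648*X^8*ss*H2 + 38528*X^8*ss*H1 + 27*X^8*ss^2*H3 + 8304*X^8*ss^2*H2 + 321024*X^8*ss^2*H1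 + 26688*X^8*ss^3*H2 + 445440*X^8*ss^3*H1 - 3072*X^8*ss^4*H2 + 54*X^9*ss^2*H3 + 84048*X^9*ss^2*H2 - 135168*X^9*ss^2*H1 - 216*X^9*ss^3*H3 - 6720*X^9*ss^3*H2 - 540672*X^9*ss^3*H1 - 36864*X^9*ss^4*H2 - 405*X^10*ss^2*H3 - 237984*X^10*ss^2*H2 - 1656*X^10*ss^3*H3 - 367680*X^10*ss^3*H2 + 196608*X^10*ss^3*H1 + 576*X^10*ss^4*H3 - 18432*X^10*ss^4*H2 + 540*X^11*ss^2*H3 + 225408*X^11*ss^2*H2 + 4024*X^11*ss^3*H3 + 839040*X^11*ss^3*H2 + 5632*X^11*ss^4*H3 + 503808*X^11*ss^4*H2 - 512*X^11*ss^5*H3 - 216*X^12*ss^2*H3 - 72960*X^12*ss^2*H2 + 21784*X^12*ss^3*H3 - 696576*X^12*ss^3*H2 - 7296*X^12*ss^4*H3 - 986112*X^12*ss^4*H2 - 5632*X^12*ss^5*H3 - 88640*X^13*ss^3*H3 + 202752*X^13*ss^3*H2 - 83712*X^13*ss^4*H3 + 737280*X^13*ss^4*H2 + 3072*X^13*ss^5*H3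 + 124352*X^14*ss^3*H3 + 275008*X^14*ss^4*H3 - 196608*X^14*ss^4*H2 + 87040*X^14*ss^5*H3 - 78592*X^15*ss^3*H3 - 346368*X^15*ss^4*H3 - 248320*X^15*ss^5*H3 + 18944*X^16*ss^3*H3 + 201216*X^16*ss^4*H3 + 287232*X^16*ss^5*H3 - 45056*X^17*ss^4*H3 - 155648*X^17*ss^5*H3 + 32768*X^18*ss^5*H3) * hscancel

lemma van0 {y : ℚ⟦X⟧} {m : ℕ} (hv : ∀ i ≤ m, coeff i y = 0) (j : ℕ) :
    coeff m (X^j * y) = 0 := by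
  rw [coeff_X_pow_mul']
  split_ifs with h
  · exact hv _ (by omega)
  · rfl

lemma van1 {y : ℚ⟦X⟧} {m : ℕ} (hv : ∀ i ≤ m, coeff i y = 0) (j : ℕ) (hj : 1 ≤ j) :
    coeff m (X^j * (D y)) = 0 := by
  rw [coeff_X_pow_mul']
  split_ifs with h
  · rw [coeff_derivative, hv _ (by omega), zero_mul]
  · rfl

lemma van2 {y : ℚ⟦X⟧} {m : ℕ} (hv : ∀ i ≤ m, coeff i y = 0) (j : ℕ) (hj : 2 ≤ j) :
    coeff m (X^j * (D (D y))) = 0 := by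
  rw [coeff_X_pow_mul']
  split_ifs with h
  · rw [coeff_derivative, coeff_derivative, hv _ (by omega), zero_mul, zero_mul]
  · rfl

lemma van3 {y : ℚ⟦X⟧} {m : ℕ} (hv : ∀ i ≤ m, coeff i y = 0) (j : ℕ) (hj : 3 ≤ j) :
    coeff m (X^j * (D (D (D y)))) = 0 := by
  rw [coeff_X_pow_mul']
  split_ifs with h
  · rw [coeff_derivative, coeff_derivative, coeff_derivative, hv _ (by omega),
      zero_mul, zero_mul, zero_mul]
  · rfl

lemma cX20 (t : ℚ⟦X⟧) : coeff 0 (X^2 * t) = 0 := by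
  rw [coeff_X_pow_mul', if_neg (by omega)]

lemma uniq (y : ℚ⟦X⟧) (h0 : coeff 0 y = 0)
    (hode : (- 216*X^2 - 864*X^3 + 1728*X^4) * y + (1 + 34*X + 262*X^2 - 352*X^3 - 5488*X^4 + 6272*X^5) * (D y) + (3*X + 75*X^2 + 534*X^3 + 348*X^4 - 4800*X^5 + 3840*X^6) * (D (D y)) + (X^2 + 22*X^3 + 145*X^4 + 152*X^5 - 832*X^6 + 512*X^7) * (D (D (D y))) = 0) : y = 0 := by
  have hdist : (- 216*X^2 - 864*X^3 + 1728*X^4) * y + (1 + 34*X + 262*X^2 - 352*X^3 - 5488*X^4 + 6272*X^5) * (D y) + (3*X + 75*X^2 + 534*X^3 + 348*X^4 - 4800*X^5 + 3840*X^6) * (D (D y)) + (X^2 + 22*X^3 + 145*X^4 + 152*X^5 - 832*X^6 + 512*X^7) * (D (D (D y)))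
      = C (-216) * (X^2 * y) + C (-864) * (X^3 * y) + C (1728) * (X^4 * y) + C (1) * (X^0 * (D y)) + C (34) * (X^1 * (D y)) + C (262) * (X^2 * (D y)) + C (-352) * (X^3 * (D y)) + C (-5488) * (X^4 * (D y)) + C (6272) * (X^5 * (D y)) + C (3) * (X^1 * (D (D y))) + C (75) * (X^2 * (D (D y))) + C (534) * (X^3 * (D (D y))) + C (348) * (X^4 * (D (D y))) + C (-4800) * (X^5 * (D (D y))) + C (3840) * (X^6 * (D (D y))) + C (1) * (X^2 * (D (D (D y)))) + C (22) * (X^3 * (D (D (D y)))) + C (145) * (X^4 * (D (D (D y)))) + C (152) * (X^5 * (D (D (D y)))) + C (-832) * (X^6 * (D (D (D y)))) + C (512) * (X^7 * (D (D (D y)))) := by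
    simp only [map_ofNat, map_one, map_neg]
    ring
  rw [hdist] at hode
  have main : ∀ n, ∀ i ≤ n, coeff i y = 0 := by
    intro n
    induction n with
    | zero =>
      intro i hi
      rw [Nat.le_zero.mp hi]
      exact h0
    | succ m hv =>
      intro i hi
      rcases Nat.lt_or_ge i (m+1) with hlt | hge
      · exact hv i (by omega)
      have hieq : i = m + 1 := by omega
      subst hieq
      have h := congrArg (coeff m) hode
      simp only [map_add, coeff_C_mul, map_zero] at h
      rw [van0 hv 2, van0 hv 3, van0 hv 4, van1 hv 1 (by norm_num), van1 hv 2 (by norm_num), van1 hv 3 (by norm_num), van1 hv 4 (by norm_num), van1 hv 5 (by norm_num), van2 hv 2 (by norm_num), van2 hv 3 (by norm_num), van2 hv 4 (by norm_num), van2 hv 5 (by norm_num), van2 hv 6 (by norm_num), van3 hv 3 (by norm_num), van3 hv 4 (by norm_num), van3 hv 5 (by norm_num), van3 hv 6 (by norm_num), van3 hv 7 (by norm_num)] at h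
      simp only [pow_zero, one_mul, pow_one] at h
      rcases m with _ | m
      · rw [cX0, cX20] at h
        simp only [coeff_derivative] at h
        norm_num at h ⊢
        linarith [h]
      rcases m with _ | m
      · rw [coeff_X_pow_mul', if_neg (by omega)] at h
        simp only [coeff_succ_X_mul, coeff_derivative] at h
        norm_num at h ⊢
        linarith [h]
      · rw [coeff_X_pow_mul', if_pos (by omega), show m+1+1-2 = m from rfl] at h
        simp only [coeff_succ_X_mul, coeff_derivative] at h
        push_cast at h
        have h3 : ((m:ℚ)+3)^3 * coeff (m+1+1+1) y = 0 := by linear_combination h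
        have hne : ((m:ℚ)+3)^3 ≠ 0 := by positivity
        exact (mul_eq_zero.mp h3).resolve_left hne
  ext n
  rw [map_zero]
  exact main n n le_rfl

lemma keyzero : ss * G0 - H0 = 0 := by
  apply uniq
  · rw [map_sub]
    have c1 : coeff 0 (ss * G0) = 1 := by
      rw [coeff_zero_eq_constantCoeff_apply, map_mul]
      have h1 : constantCoeff ss = 1 := by
        rw [show ss = (1 + 8*X : ℚ⟦X⟧)⁻¹ from rfl, PowerSeries.constantCoeff_inv]
        simp
      have h2 : constantCoeff G0 = 1 := by
        rw [← coeff_zero_eq_constantCoeff_apply, show G0 = psComp F0 uu from rfl,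
          coeff_zero_psComp, hcF0]
        norm_num
      rw [h1, h2, one_mul]
    have c2 : coeff 0 H0 = 1 := by
      rw [show H0 = psComp F0 vv from rfl, coeff_zero_psComp, hcF0]
      norm_num
    rw [c1, c2, sub_self]
  · simp only [map_sub]
    linear_combination hMu - hMv

lemma final : (1 + 8 * X : PowerSeries ℚ)⁻¹ * psComp f4hat (X * ((1 - X) * (1 + 8 * X)⁻¹) ^ 3)
    = psComp f4hat (X ^ 3 * (1 - X) * (1 + 8 * X)⁻¹) :=
  sub_eq_zero.mp keyzero

end FE4

theorem functional_equation_f4hat :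
    (1 + 8 * X : PowerSeries ℚ)⁻¹ * psComp f4hat (X * ((1 - X) * (1 + 8 * X)⁻¹) ^ 3)
      = psComp f4hat (X ^ 3 * (1 - X) * (1 + 8 * X)⁻¹) := FE4.final
end
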